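/- arXiv:0902.2444 — 5 statements merged into one kernel-verified Lean document; each statement's English description precedes it below -/
import Mathlib

section
/- Let G₁, G₂ be graphs with n₁, n₂ vertices respectively, and let G be a t-connected sum of G₁ and G₂ (glued along complete subgraphs on t vertices). Then for every k, c_k(G) = Σ_{i=0}^{k} [c_i(G₁)·C(n₂−t, k−i) + c_i(G₂)·C(n₁−t, k−i)] − C(n₁+n₂−t, k) + C(n₁+n₂−2t, k), where c_k(H) = Σ_{|W|=k} c(H|_W) counts connected components over all k-subsets. -/
open Finset

/-- Number of connected components of the induced subgraph on `W`, summed over all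
`k`-subsets, each minus 1: the `k`-th special graded Betti number of a graph. -/
noncomputable def graphB {V : Type} [Fintype V] [DecidableEq V] (k : ℕ) (G : SimpleGraph V) : ℤ :=
  ∑ W ∈ Finset.powersetCard k (Finset.univ : Finset V),
    ((Nat.card (G.induce (W : Set V)).ConnectedComponent : ℤ) - 1)

/-- `c_k(G)`: total number of connected components over all `k`-subsets. -/
noncomputable def graphC {V : Type} [Fintype V] [DecidableEq V] (k : ℕ) (G : SimpleGraph V) : ℕ :=
  ∑ W ∈ Finset.powersetCard k (Finset.univ : Finset V),
    Nat.card (G.induce (W : Set V)).ConnectedComponent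

/-- `G` is a `t`-connected sum of `G₁` and `G₂`. -/
def IsConnSum {V₁ V₂ V : Type} (t : ℕ) (G₁ : SimpleGraph V₁) (G₂ : SimpleGraph V₂)
    (G : SimpleGraph V) : Prop :=
  ∃ (f₁ : V₁ ↪ V) (f₂ : V₂ ↪ V) (F₁ : Set V₁) (F₂ : Set V₂),
    Nat.card F₁ = t ∧ Nat.card F₂ = t ∧
    (∀ x ∈ F₁, ∀ y ∈ F₁, x ≠ y → G₁.Adj x y) ∧
    (∀ x ∈ F₂, ∀ y ∈ F₂, x ≠ y → G₂.Adj x y) ∧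
    Set.range f₁ ∪ Set.range f₂ = Set.univ ∧
    Set.range f₁ ∩ Set.range f₂ = f₁ '' F₁ ∧
    f₁ '' F₁ = f₂ '' F₂ ∧
    (∀ a b, G.Adj a b ↔
      ((∃ x y, G₁.Adj x y ∧ f₁ x = a ∧ f₁ y = b) ∨
       (∃ x y, G₂.Adj x y ∧ f₂ x = a ∧ f₂ y = b)))

/-- Iterated `t`-connected sums of a list of graphs. -/
inductive IsIterConnSum (t : ℕ) :
    List ((W : Type) × SimpleGraph W) → ((W : Type) × SimpleGraph W) → Prop
  | single (p : (W : Type) × SimpleGraph W) : IsIterConnSum t [p] p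
  | cons {l : List ((W : Type) × SimpleGraph W)} {p q r : (W : Type) × SimpleGraph W} :
      IsIterConnSum t l p → IsConnSum t p.2 q.2 r.2 → IsIterConnSum t (l ++ [q]) r

/-- An abstract simplicial complex on the finite vertex set `V`. -/
structure SimpComplex (V : Type) [DecidableEq V] where
  faces : Finset (Finset V)
  singleton_mem : ∀ v : V, {v} ∈ faces
  down_closed : ∀ F ∈ faces, ∀ F', F' ⊆ F → F' ∈ faces

/-- The 1-skeleton of a simplicial complex. -/
def SimpComplex.skeleton {V : Type} [DecidableEq V] (Δ : SimpComplex V) : SimpleGraph V where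
  Adj x y := x ≠ y ∧ ({x, y} : Finset V) ∈ Δ.faces
  symm := by
    constructor
    intro x y h
    exact ⟨h.1.symm, by rw [Finset.pair_comm]; exact h.2⟩
  loopless := by constructor; intro x h; exact h.1 rfl

/-- The graph of the restricted complex `Δ_W = {F ∩ W : F ∈ Δ}` on the vertex set `W`:
two vertices are connected iff they form a face of `Δ_W`. -/
def SimpComplex.restrictGraph {V : Type} [DecidableEq V] (Δ : SimpComplex V) (W : Finset V) :
    SimpleGraph (W : Set V) :=
  SimpleGraph.fromRel (fun x y => ∃ F ∈ Δ.faces, F ∩ W = {(x : V), (y : V)})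

/-- The `k`-th special graded Betti number of a simplicial complex. -/
noncomputable def complexB {V : Type} [Fintype V] [DecidableEq V] (k : ℕ)
    (Δ : SimpComplex V) : ℤ :=
  ∑ W ∈ Finset.powersetCard k (Finset.univ : Finset V),
    ((Nat.card (Δ.restrictGraph W).ConnectedComponent : ℤ) - 1)

/-- `Δ` is a `t`-connected sum of the simplicial complexes `Δ₁` and `Δ₂`. -/
def IsConnSumC {V₁ V₂ V : Type} [DecidableEq V₁] [DecidableEq V₂] [DecidableEq V] (t : ℕ)
    (Δ₁ : SimpComplex V₁) (Δ₂ : SimpComplex V₂) (Δ : SimpComplex V) : Prop :=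
  ∃ (f₁ : V₁ ↪ V) (f₂ : V₂ ↪ V) (F₁ : Finset V₁) (F₂ : Finset V₂),
    F₁.card = t ∧ F₂.card = t ∧ F₁ ∈ Δ₁.faces ∧ F₂ ∈ Δ₂.faces ∧
    (∀ F ∈ Δ₁.faces, F₁ ⊆ F → F = F₁) ∧
    (∀ F ∈ Δ₂.faces, F₂ ⊆ F → F = F₂) ∧
    Set.range f₁ ∪ Set.range f₂ = Set.univ ∧
    Set.range f₁ ∩ Set.range f₂ = ↑(F₁.image ⇑f₁) ∧
    F₁.image ⇑f₁ = F₂.image ⇑f₂ ∧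
    Δ.faces = (Δ₁.faces.image (Finset.image ⇑f₁) ∪ Δ₂.faces.image (Finset.image ⇑f₂))
      \ {F₁.image ⇑f₁}

open SimpleGraph


lemma key_walk {V : Type} (G : SimpleGraph V) (s₁ s₂ s : Set V) (hs : s = s₁ ∪ s₂)
    (hedge : ∀ a b, a ∈ s → b ∈ s → G.Adj a b →
      (a ∈ s₁ ∧ b ∈ s₁) ∨ (a ∈ s₂ ∧ b ∈ s₂))
    (hclique : ∀ a ∈ s₁ ∩ s₂, ∀ b ∈ s₁ ∩ s₂, a ≠ b → G.Adj a b)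
    {u y : ↑s} (w : (G.induce s).Walk u y) (hy : (y : V) ∈ s₁) :
    (∀ hu : (u : V) ∈ s₁, (G.induce s₁).Reachable ⟨u, hu⟩ ⟨y, hy⟩) ∧
    (∀ hu : (u : V) ∈ s₂, ∃ c, ∃ hc₁ : c ∈ s₁, ∃ hc₂ : c ∈ s₂,
      (G.induce s₂).Reachable ⟨u, hu⟩ ⟨c, hc₂⟩ ∧ (G.induce s₁).Reachable ⟨c, hc₁⟩ ⟨y, hy⟩) := by
  induction w with
  | nil =>
    exact ⟨fun hu => Reachable.refl _, fun hu => ⟨_, hy, hu, Reachable.refl _, Reachable.refl _⟩⟩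
  | @cons u b _ hadj w ih =>
    have hadj' : G.Adj (u : V) (b : V) := hadj
    have hne : (u : V) ≠ (b : V) := hadj'.ne
    have hbmem : (b : V) ∈ s₁ ∪ s₂ := hs ▸ b.2
    constructor
    · intro hu
      by_cases hb : (b : V) ∈ s₁
      · exact (Adj.reachable (by exact hadj' : (G.induce s₁).Adj ⟨u, hu⟩ ⟨b, hb⟩)).trans ((ih hy).1 hb)
      · -- b ∈ s₂ \ s₁, so edge is within s₂ and u is a clique vertex
        have hb₂ : (b : V) ∈ s₂ := hbmem.resolve_left hb
        have hu₂ : (u : V) ∈ s₂ := by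
          rcases hedge u b u.2 b.2 hadj' with h' | h'
          · exact absurd h'.2 hb
          · exact h'.1
        obtain ⟨c, hc₁, hc₂, h2, h1⟩ := (ih hy).2 hb₂
        have hr : (G.induce s₁).Reachable ⟨u, hu⟩ ⟨c, hc₁⟩ := by
          by_cases huc : (u : V) = c
          · subst huc; exact Reachable.refl _
          · exact Adj.reachable (by exact hclique u ⟨hu, hu₂⟩ c ⟨hc₁, hc₂⟩ huc)
        exact hr.trans h1
    · intro hu
      by_cases hb : (b : V) ∈ s₂
      · obtain ⟨c, hc₁, hc₂, h2, h1⟩ := (ih hy).2 hb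
        exact ⟨c, hc₁, hc₂,
          (Adj.reachable (by exact hadj' : (G.induce s₂).Adj ⟨u, hu⟩ ⟨b, hb⟩)).trans h2, h1⟩
      · have hb₁ : (b : V) ∈ s₁ := hbmem.resolve_right hb
        have hu₁ : (u : V) ∈ s₁ := by
          rcases hedge u b u.2 b.2 hadj' with h' | h'
          · exact h'.1
          · exact absurd h'.2 hb
        refine ⟨u, hu₁, hu, Reachable.refl _, ?_⟩
        exact (Adj.reachable (by exact hadj' : (G.induce s₁).Adj ⟨u, hu₁⟩ ⟨b, hb₁⟩)).trans ((ih hy).1 hb₁)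

open scoped Classical in
lemma glue_count {V : Type} [Fintype V] (G : SimpleGraph V) (s₁ s₂ : Set V)
    (hedge : ∀ a b, a ∈ s₁ ∪ s₂ → b ∈ s₁ ∪ s₂ → G.Adj a b →
      (a ∈ s₁ ∧ b ∈ s₁) ∨ (a ∈ s₂ ∧ b ∈ s₂))
    (hclique : ∀ a ∈ s₁ ∩ s₂, ∀ b ∈ s₁ ∩ s₂, a ≠ b → G.Adj a b) :
    (Nat.card (G.induce (s₁ ∪ s₂)).ConnectedComponent : ℤ)
      = (Nat.card (G.induce s₁).ConnectedComponent : ℤ)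
        + (Nat.card (G.induce s₂).ConnectedComponent : ℤ)
        - (if (s₁ ∩ s₂).Nonempty then 1 else 0) := by
  have le₁ : s₁ ≤ s₁ ∪ s₂ := Set.subset_union_left
  have le₂ : s₂ ≤ s₁ ∪ s₂ := Set.subset_union_right
  set ι₁ : (G.induce s₁).ConnectedComponent → (G.induce (s₁ ∪ s₂)).ConnectedComponent :=
    ConnectedComponent.map (G.induceHomOfLE le₁).toHom with hι₁
  set ι₂ : (G.induce s₂).ConnectedComponent → (G.induce (s₁ ∪ s₂)).ConnectedComponent :=
    ConnectedComponent.map (G.induceHomOfLE le₂).toHom with hι₂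
  have main : ∀ (x y : ↑(s₁ ∪ s₂)), (G.induce (s₁ ∪ s₂)).Reachable x y → ∀ hy : (y : V) ∈ s₁,
      (∀ hx : (x : V) ∈ s₁, (G.induce s₁).Reachable ⟨x, hx⟩ ⟨y, hy⟩) ∧
      (∀ hx : (x : V) ∈ s₂, ∃ c, ∃ hc₁ : c ∈ s₁, ∃ hc₂ : c ∈ s₂,
        (G.induce s₂).Reachable ⟨x, hx⟩ ⟨c, hc₂⟩ ∧ (G.induce s₁).Reachable ⟨c, hc₁⟩ ⟨y, hy⟩) :=
    fun x y hR hy => hR.elim fun w => key_walk G s₁ s₂ _ rfl hedge hclique w hy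
  have main₂ : ∀ (x y : ↑(s₁ ∪ s₂)), (G.induce (s₁ ∪ s₂)).Reachable x y → ∀ hy : (y : V) ∈ s₂,
      (∀ hx : (x : V) ∈ s₂, (G.induce s₂).Reachable ⟨x, hx⟩ ⟨y, hy⟩) :=
    fun x y hR hy => hR.elim fun w =>
      (key_walk G s₂ s₁ _ (Set.union_comm s₁ s₂)
        (fun a b ha hb hab => (hedge a b ha hb hab).symm)
        (fun a ha b hb hne => hclique a ⟨ha.2, ha.1⟩ b ⟨hb.2, hb.1⟩ hne) w hy).1
  have inj₁ : Function.Injective ι₁ := by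
    intro C C' hCC
    obtain ⟨x, rfl⟩ := C.exists_rep
    obtain ⟨x', rfl⟩ := C'.exists_rep
    have hR : (G.induce (s₁ ∪ s₂)).Reachable ⟨(x : V), le₁ x.2⟩ ⟨(x' : V), le₁ x'.2⟩ :=
      ConnectedComponent.eq.mp hCC
    exact ConnectedComponent.sound ((main _ _ hR x'.2).1 x.2)
  have inj₂ : Function.Injective ι₂ := by
    intro C C' hCC
    obtain ⟨x, rfl⟩ := C.exists_rep
    obtain ⟨x', rfl⟩ := C'.exists_rep
    have hR : (G.induce (s₁ ∪ s₂)).Reachable ⟨(x : V), le₂ x.2⟩ ⟨(x' : V), le₂ x'.2⟩ :=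
      ConnectedComponent.eq.mp hCC
    exact ConnectedComponent.sound (main₂ _ _ hR x'.2 x.2)
  have huniv : Set.range ι₁ ∪ Set.range ι₂ = Set.univ := by
    ext D
    simp only [Set.mem_union, Set.mem_range, Set.mem_univ, iff_true]
    obtain ⟨u, rfl⟩ := D.exists_rep
    rcases u.2 with hu | hu
    · exact Or.inl ⟨(G.induce s₁).connectedComponentMk ⟨u, hu⟩,
        congrArg ((G.induce (s₁ ∪ s₂)).connectedComponentMk) (Subtype.ext rfl)⟩
    · exact Or.inr ⟨(G.induce s₂).connectedComponentMk ⟨u, hu⟩,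
        congrArg ((G.induce (s₁ ∪ s₂)).connectedComponentMk) (Subtype.ext rfl)⟩
  have meet : ∀ D, D ∈ Set.range ι₁ ∩ Set.range ι₂ → ∃ c, ∃ hc : c ∈ s₁ ∩ s₂,
      D = (G.induce (s₁ ∪ s₂)).connectedComponentMk ⟨c, le₁ hc.1⟩ := by
    rintro D ⟨⟨C, hC⟩, ⟨C', hC'⟩⟩
    obtain ⟨x, rfl⟩ := C.exists_rep
    obtain ⟨z, rfl⟩ := C'.exists_rep
    have hR : (G.induce (s₁ ∪ s₂)).Reachable ⟨(z : V), le₂ z.2⟩ ⟨(x : V), le₁ x.2⟩ := by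
      rw [← hC'] at hC
      exact ConnectedComponent.eq.mp hC.symm
    obtain ⟨c, hc₁, hc₂, r₂, r₁⟩ := (main _ _ hR x.2).2 z.2
    refine ⟨c, ⟨hc₁, hc₂⟩, ?_⟩
    rw [← hC]
    have : (G.induce (s₁ ∪ s₂)).Reachable ⟨(x : V), le₁ x.2⟩ ⟨c, le₁ hc₁⟩ :=
      (r₁.map (G.induceHomOfLE le₁).toHom).symm
    exact (ConnectedComponent.sound this)
  have hcard₁ : (Set.range ι₁).ncard = Nat.card (G.induce s₁).ConnectedComponent := by
    rw [← Nat.card_coe_set_eq, Nat.card_range_of_injective inj₁]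
  have hcard₂ : (Set.range ι₂).ncard = Nat.card (G.induce s₂).ConnectedComponent := by
    rw [← Nat.card_coe_set_eq, Nat.card_range_of_injective inj₂]
  have hkey := Set.ncard_union_add_ncard_inter (Set.range ι₁) (Set.range ι₂)
    (Set.toFinite _) (Set.toFinite _)
  rw [huniv, Set.ncard_univ, hcard₁, hcard₂] at hkey
  have hinter : (Set.range ι₁ ∩ Set.range ι₂).ncard = if (s₁ ∩ s₂).Nonempty then 1 else 0 := by
    by_cases hne : (s₁ ∩ s₂).Nonempty
    · obtain ⟨c₀, hc₀⟩ := hne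
      rw [if_pos ⟨c₀, hc₀⟩]
      have : Set.range ι₁ ∩ Set.range ι₂
          = {(G.induce (s₁ ∪ s₂)).connectedComponentMk ⟨c₀, le₁ hc₀.1⟩} := by
        ext D
        constructor
        · intro hD
          obtain ⟨c, hc, rfl⟩ := meet D hD
          have : (G.induce (s₁ ∪ s₂)).Reachable ⟨c, le₁ hc.1⟩ ⟨c₀, le₁ hc₀.1⟩ := by
            by_cases hcc : c = c₀
            · subst hcc; exact Reachable.refl _
            · exact Adj.reachable (by exact hclique c hc c₀ hc₀ hcc)
          exact ConnectedComponent.sound this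
        · rintro rfl
          constructor
          · exact ⟨(G.induce s₁).connectedComponentMk ⟨c₀, hc₀.1⟩,
              congrArg ((G.induce (s₁ ∪ s₂)).connectedComponentMk) (Subtype.ext rfl)⟩
          · exact ⟨(G.induce s₂).connectedComponentMk ⟨c₀, hc₀.2⟩,
              congrArg ((G.induce (s₁ ∪ s₂)).connectedComponentMk) (Subtype.ext rfl)⟩
      rw [this, Set.ncard_singleton]
    · rw [if_neg hne]
      have : Set.range ι₁ ∩ Set.range ι₂ = ∅ := by
        ext D
        simp only [Set.mem_empty_iff_false, iff_false]
        intro hD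
        obtain ⟨c, hc, -⟩ := meet D hD
        exact hne ⟨c, hc⟩
      rw [this, Set.ncard_empty]
  rw [hinter] at hkey
  by_cases hne : (s₁ ∩ s₂).Nonempty <;> simp only [hne, if_true, if_false] at hkey ⊢ <;> omega


lemma sum_inter_powersetCard {V : Type} [Fintype V] [DecidableEq V] (S : Finset V) (k : ℕ)
    (g : Finset V → ℤ) :
    ∑ W ∈ powersetCard k (univ : Finset V), g (W ∩ S)
      = ∑ i ∈ range (k + 1), (∑ T ∈ powersetCard i S, g T) * (Sᶜ.card.choose (k - i)) := by
  have main : ∑ W ∈ powersetCard k (univ : Finset V), g (W ∩ S)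
      = ∑ x ∈ (range (k + 1)).sigma (fun i => powersetCard i S ×ˢ powersetCard (k - i) Sᶜ),
          g x.2.1 := by
    refine Finset.sum_nbij' (fun W => (⟨(W ∩ S).card, (W ∩ S, W \ S)⟩ :
        (i : ℕ) × (Finset V × Finset V))) (fun x => x.2.1 ∪ x.2.2) ?_ ?_ ?_ ?_ ?_
    · intro W hW
      rw [mem_powersetCard] at hW
      have h1 : (W ∩ S).card + (W \ S).card = W.card := card_inter_add_card_sdiff W S
      rw [mem_sigma, mem_product, mem_range, mem_powersetCard, mem_powersetCard]
      dsimp only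
      refine ⟨by omega, ⟨inter_subset_right, rfl⟩, ?_, by omega⟩
      intro v hv
      rw [mem_sdiff] at hv
      exact mem_compl.mpr hv.2
    · rintro ⟨i, T, U⟩ hx
      rw [mem_sigma, mem_product, mem_range, mem_powersetCard, mem_powersetCard] at hx
      obtain ⟨hi, ⟨hTS, hT⟩, hUS, hU⟩ := hx
      rw [mem_powersetCard]
      refine ⟨subset_univ _, ?_⟩
      rw [card_union_of_disjoint, hT, hU]
      · omega
      · rw [Finset.disjoint_left]
        intro a haT haU
        exact (mem_compl.mp (hUS haU)) (hTS haT)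
    · intro W _
      dsimp only
      exact sup_inf_sdiff W S
    · rintro ⟨i, T, U⟩ hx
      rw [mem_sigma, mem_product, mem_range, mem_powersetCard, mem_powersetCard] at hx
      obtain ⟨hi, ⟨hTS, hT⟩, hUS, hU⟩ := hx
      have hdisj : ∀ a ∈ U, a ∉ S := fun a haU => mem_compl.mp (hUS haU)
      have hP : (T ∪ U) ∩ S = T := by
        rw [union_inter_distrib_right, inter_eq_left.mpr hTS]
        have : U ∩ S = ∅ := by
          rw [eq_empty_iff_forall_notMem]
          intro a ha
          rw [mem_inter] at ha
          exact hdisj a ha.1 ha.2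
        rw [this, union_empty]
      have hQ : (T ∪ U) \ S = U := by
        rw [union_sdiff_distrib, sdiff_eq_empty_iff_subset.mpr hTS, empty_union]
        rw [Finset.sdiff_eq_self_iff_disjoint, Finset.disjoint_left]
        exact fun a ha h => hdisj a ha h
      simp only
      rw [hP, hQ, hT]
    · intro W _
      rfl
  rw [main, Finset.sum_sigma]
  refine Finset.sum_congr rfl fun i _ => ?_
  rw [Finset.sum_product, Finset.sum_mul]
  refine Finset.sum_congr rfl fun T _ => ?_
  dsimp only
  rw [Finset.sum_const, nsmul_eq_mul, mul_comm, Finset.card_powersetCard]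


lemma card_comp_preimage {V₁ V : Type} (G₁ : SimpleGraph V₁) (G : SimpleGraph V)
    (f : V₁ ↪ V) (hadj : ∀ x y, G.Adj (f x) (f y) ↔ G₁.Adj x y) (s : Set V) :
    Nat.card (G.induce (s ∩ Set.range f)).ConnectedComponent
      = Nat.card (G₁.induce (f ⁻¹' s)).ConnectedComponent := by
  have hbij : Function.Bijective (fun x : ↥(f ⁻¹' s) =>
      (⟨f x, x.2, ⟨x, rfl⟩⟩ : ↥(s ∩ Set.range f))) := by
    constructor
    · intro a b hab
      exact Subtype.ext (f.injective (congrArg Subtype.val hab))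
    · rintro ⟨v, hv, x, rfl⟩
      exact ⟨⟨x, hv⟩, rfl⟩
  let e : G₁.induce (f ⁻¹' s) ≃g G.induce (s ∩ Set.range f) :=
    { toEquiv := Equiv.ofBijective _ hbij
      map_rel_iff' := by intro a b; exact hadj a b }
  exact (Nat.card_congr e.connectedComponentEquiv).symm


/-- the formula for `c_k` of a `t`-connected sum of two graphs. -/
theorem ck_connSum {V₁ V₂ V : Type} [Fintype V₁] [DecidableEq V₁] [Fintype V₂] [DecidableEq V₂]
    [Fintype V] [DecidableEq V] (t k n₁ n₂ : ℕ)
    (G₁ : SimpleGraph V₁) (G₂ : SimpleGraph V₂) (G : SimpleGraph V)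
    (hn₁ : Fintype.card V₁ = n₁) (hn₂ : Fintype.card V₂ = n₂)
    (h : IsConnSum t G₁ G₂ G) :
    (graphC k G : ℤ) =
      (∑ i ∈ Finset.range (k + 1),
        ((graphC i G₁ : ℤ) * ((n₂ - t).choose (k - i)) +
         (graphC i G₂ : ℤ) * ((n₁ - t).choose (k - i))))
      - ((n₁ + n₂ - t).choose k) + ((n₁ + n₂ - 2 * t).choose k) := by
  classical
  obtain ⟨f₁, f₂, F₁, F₂, htF₁, htF₂, hclq₁, hclq₂, hcover, hinter, hFimg, hAdj⟩ := h
  set A := Set.range f₁ with hA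
  set B := Set.range f₂ with hB
  have hinter₂ : A ∩ B = f₂ '' F₂ := hinter.trans hFimg
  -- adjacency transfer
  have hadj₁ : ∀ x y, G.Adj (f₁ x) (f₁ y) ↔ G₁.Adj x y := by
    intro x y
    constructor
    · intro hxy
      rcases (hAdj _ _).mp hxy with ⟨x', y', hG, hx, hy⟩ | ⟨x', y', hG, hx, hy⟩
      · rwa [f₁.injective hx, f₁.injective hy] at hG
      · have hxm : f₁ x ∈ f₁ '' F₁ := by
          rw [← hinter]; exact ⟨⟨x, rfl⟩, ⟨x', hx⟩⟩
        have hym : f₁ y ∈ f₁ '' F₁ := by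
          rw [← hinter]; exact ⟨⟨y, rfl⟩, ⟨y', hy⟩⟩
        obtain ⟨x₀, hx₀, hx₀e⟩ := hxm
        obtain ⟨y₀, hy₀, hy₀e⟩ := hym
        have hxe : x₀ = x := f₁.injective hx₀e
        have hye : y₀ = y := f₁.injective hy₀e
        subst hxe hye
        exact hclq₁ x₀ hx₀ y₀ hy₀ (fun hc => hxy.ne (congrArg f₁ hc))
    · intro hxy
      exact (hAdj _ _).mpr (Or.inl ⟨x, y, hxy, rfl, rfl⟩)
  have hadj₂ : ∀ x y, G.Adj (f₂ x) (f₂ y) ↔ G₂.Adj x y := by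
    intro x y
    constructor
    · intro hxy
      rcases (hAdj _ _).mp hxy with ⟨x', y', hG, hx, hy⟩ | ⟨x', y', hG, hx, hy⟩
      · have hxm : f₂ x ∈ f₂ '' F₂ := by
          rw [← hinter₂]; exact ⟨⟨x', hx⟩, ⟨x, rfl⟩⟩
        have hym : f₂ y ∈ f₂ '' F₂ := by
          rw [← hinter₂]; exact ⟨⟨y', hy⟩, ⟨y, rfl⟩⟩
        obtain ⟨x₀, hx₀, hx₀e⟩ := hxm
        obtain ⟨y₀, hy₀, hy₀e⟩ := hym
        have hxe : x₀ = x := f₂.injective hx₀e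
        have hye : y₀ = y := f₂.injective hy₀e
        subst hxe hye
        exact hclq₂ x₀ hx₀ y₀ hy₀ (fun hc => hxy.ne (congrArg f₂ hc))
      · rwa [f₂.injective hx, f₂.injective hy] at hG
    · intro hxy
      exact (hAdj _ _).mpr (Or.inr ⟨x, y, hxy, rfl, rfl⟩)
  have hedge : ∀ a b, G.Adj a b → (a ∈ A ∧ b ∈ A) ∨ (a ∈ B ∧ b ∈ B) := by
    intro a b hab
    rcases (hAdj a b).mp hab with ⟨x, y, _, hx, hy⟩ | ⟨x, y, _, hx, hy⟩
    · exact Or.inl ⟨⟨x, hx⟩, ⟨y, hy⟩⟩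
    · exact Or.inr ⟨⟨x, hx⟩, ⟨y, hy⟩⟩
  have hclq : ∀ a ∈ A ∩ B, ∀ b ∈ A ∩ B, a ≠ b → G.Adj a b := by
    intro a ha b hb hne
    rw [hinter] at ha hb
    obtain ⟨x, hx, rfl⟩ := ha
    obtain ⟨y, hy, rfl⟩ := hb
    exact (hadj₁ x y).mpr (hclq₁ x hx y hy (fun hc => hne (congrArg f₁ hc)))
  -- finsets
  set SA : Finset V := Finset.univ.image f₁ with hSAdef
  set SB : Finset V := Finset.univ.image f₂ with hSBdef
  have hSA : (↑SA : Set V) = A := by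
    rw [hSAdef, coe_image, coe_univ, Set.image_univ]
  have hSB : (↑SB : Set V) = B := by
    rw [hSBdef, coe_image, coe_univ, Set.image_univ]
  set FF : Finset V := SA ∩ SB with hFFdef
  have hFF : (↑FF : Set V) = A ∩ B := by
    rw [hFFdef, coe_inter, hSA, hSB]
  -- cardinalities
  have hcSA : SA.card = n₁ := by
    rw [hSAdef, card_image_of_injective _ f₁.injective, card_univ, hn₁]
  have hcSB : SB.card = n₂ := by
    rw [hSBdef, card_image_of_injective _ f₂.injective, card_univ, hn₂]
  have hcFF : FF.card = t := by
    have h1 : (↑FF : Set V).ncard = t := by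
      rw [hFF, hinter, Set.ncard_image_of_injective _ f₁.injective,
        ← Nat.card_coe_set_eq, htF₁]
    rwa [Set.ncard_coe_finset] at h1
  have ht₁ : t ≤ n₁ := by
    rw [← htF₁, ← hn₁, ← Nat.card_eq_fintype_card]
    exact Nat.card_le_card_of_injective _ Subtype.val_injective
  have ht₂ : t ≤ n₂ := by
    rw [← htF₂, ← hn₂, ← Nat.card_eq_fintype_card]
    exact Nat.card_le_card_of_injective _ Subtype.val_injective
  have hUAB : SA ∪ SB = Finset.univ := by
    apply Finset.coe_injective
    rw [coe_union, hSA, hSB, coe_univ, hcover]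
  have hN : Fintype.card V + t = n₁ + n₂ := by
    have h2 := Finset.card_union_add_card_inter SA SB
    rw [hUAB, card_univ, ← hFFdef, hcFF, hcSA, hcSB] at h2
    exact h2
  -- component count transfer functions
  set g₁ : Finset V → ℤ :=
    fun T => (Nat.card (G₁.induce (⇑f₁ ⁻¹' (↑T : Set V))).ConnectedComponent : ℤ) with hg₁
  set g₂ : Finset V → ℤ :=
    fun T => (Nat.card (G₂.induce (⇑f₂ ⁻¹' (↑T : Set V))).ConnectedComponent : ℤ) with hg₂
  -- the per-subset identity
  have perW : ∀ W ∈ Finset.powersetCard k (Finset.univ : Finset V),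
      (Nat.card (G.induce (↑W : Set V)).ConnectedComponent : ℤ)
        = g₁ (W ∩ SA) + g₂ (W ∩ SB) - (if (W ∩ FF).Nonempty then 1 else 0) := by
    intro W _
    have hsplit : (↑W : Set V) = (↑W ∩ A) ∪ (↑W ∩ B) := by
      rw [← Set.inter_union_distrib_left, hcover, Set.inter_univ]
    have hglue := glue_count G (↑W ∩ A) (↑W ∩ B)
      (fun a b ha hb hab => by
        have haW : a ∈ (↑W : Set V) := by rcases ha with h' | h' <;> exact h'.1
        have hbW : b ∈ (↑W : Set V) := by rcases hb with h' | h' <;> exact h'.1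
        rcases hedge a b hab with h' | h'
        · exact Or.inl ⟨⟨haW, h'.1⟩, ⟨hbW, h'.2⟩⟩
        · exact Or.inr ⟨⟨haW, h'.1⟩, ⟨hbW, h'.2⟩⟩)
      (fun a ha b hb hne => hclq a ⟨ha.1.2, ha.2.2⟩ b ⟨hb.1.2, hb.2.2⟩ hne)
    rw [hsplit, hglue]
    have e₁ : (Nat.card (G.induce ((↑W : Set V) ∩ A)).ConnectedComponent : ℤ) = g₁ (W ∩ SA) := by
      simp only [hg₁]
      have : (⇑f₁ ⁻¹' (↑(W ∩ SA) : Set V)) = ⇑f₁ ⁻¹' (↑W : Set V) := by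
        ext x
        simp only [Set.mem_preimage, coe_inter, Set.mem_inter_iff, mem_coe]
        exact ⟨fun h' => h'.1, fun h' => ⟨h', by rw [← mem_coe, hSA]; exact ⟨x, rfl⟩⟩⟩
      rw [this, hA, card_comp_preimage G₁ G f₁ hadj₁ (↑W : Set V)]
    have e₂ : (Nat.card (G.induce ((↑W : Set V) ∩ B)).ConnectedComponent : ℤ) = g₂ (W ∩ SB) := by
      simp only [hg₂]
      have : (⇑f₂ ⁻¹' (↑(W ∩ SB) : Set V)) = ⇑f₂ ⁻¹' (↑W : Set V) := by
        ext x
        simp only [Set.mem_preimage, coe_inter, Set.mem_inter_iff, mem_coe]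
        exact ⟨fun h' => h'.1, fun h' => ⟨h', by rw [← mem_coe, hSB]; exact ⟨x, rfl⟩⟩⟩
      rw [this, hB, card_comp_preimage G₂ G f₂ hadj₂ (↑W : Set V)]
    have e₃ : ((↑W : Set V) ∩ A) ∩ ((↑W : Set V) ∩ B) = (↑(W ∩ FF) : Set V) := by
      rw [coe_inter, hFF]
      ext x
      simp only [Set.mem_inter_iff]
      tauto
    rw [e₁, e₂, e₃]
    simp only [Finset.coe_nonempty]
  -- summation
  have hG : (graphC k G : ℤ)
      = ∑ W ∈ Finset.powersetCard k (Finset.univ : Finset V),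
          (g₁ (W ∩ SA) + g₂ (W ∩ SB) - (if (W ∩ FF).Nonempty then 1 else 0)) := by
    rw [graphC, Nat.cast_sum]
    exact Finset.sum_congr rfl perW
  rw [hG, Finset.sum_sub_distrib, Finset.sum_add_distrib]
  have hSAc : SAᶜ.card = n₂ - t := by rw [card_compl, hcSA]; omega
  have hSBc : SBᶜ.card = n₁ - t := by rw [card_compl, hcSB]; omega
  have hinner₁ : ∀ i : ℕ, ∑ T ∈ Finset.powersetCard i SA, g₁ T = (graphC i G₁ : ℤ) := by
    intro i
    rw [graphC, Nat.cast_sum]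
    refine Finset.sum_nbij' (i := fun T => T.preimage f₁ f₁.injective.injOn)
      (j := fun T => T.image f₁) ?_ ?_ ?_ ?_ ?_
    · intro T hT
      rw [mem_powersetCard] at hT ⊢
      refine ⟨subset_univ _, ?_⟩
      have himg : (T.preimage f₁ f₁.injective.injOn).image f₁ = T := by
        rw [image_preimage]
        refine Finset.filter_true_of_mem fun x hx => ?_
        have : x ∈ (↑SA : Set V) := hT.1 hx
        rw [hSA] at this
        exact this
      conv_rhs => rw [← hT.2, ← himg]
      rw [card_image_of_injective _ f₁.injective]
    · intro T hT
      rw [mem_powersetCard] at hT ⊢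
      refine ⟨?_, by rw [card_image_of_injective _ f₁.injective, hT.2]⟩
      intro x hx
      obtain ⟨y, _, rfl⟩ := Finset.mem_image.mp hx
      exact Finset.mem_image.mpr ⟨y, mem_univ y, rfl⟩
    · intro T hT
      rw [mem_powersetCard] at hT
      rw [image_preimage]
      refine Finset.filter_true_of_mem fun x hx => ?_
      have : x ∈ (↑SA : Set V) := hT.1 hx
      rw [hSA] at this
      exact this
    · intro T _
      rw [← Finset.map_eq_image]
      exact Finset.preimage_map f₁ T
    · intro T _
      simp only [hg₁]
      have hco : (↑(T.preimage ⇑f₁ f₁.injective.injOn) : Set V₁) = ⇑f₁ ⁻¹' (↑T : Set V)  :=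
        Finset.coe_preimage T f₁.injective.injOn
      rw [hco]
  have hinner₂ : ∀ i : ℕ, ∑ T ∈ Finset.powersetCard i SB, g₂ T = (graphC i G₂ : ℤ) := by
    intro i
    rw [graphC, Nat.cast_sum]
    refine Finset.sum_nbij' (i := fun T => T.preimage f₂ f₂.injective.injOn)
      (j := fun T => T.image f₂) ?_ ?_ ?_ ?_ ?_
    · intro T hT
      rw [mem_powersetCard] at hT ⊢
      refine ⟨subset_univ _, ?_⟩
      have himg : (T.preimage f₂ f₂.injective.injOn).image f₂ = T := by
        rw [image_preimage]
        refine Finset.filter_true_of_mem fun x hx => ?_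
        have : x ∈ (↑SB : Set V) := hT.1 hx
        rw [hSB] at this
        exact this
      conv_rhs => rw [← hT.2, ← himg]
      rw [card_image_of_injective _ f₂.injective]
    · intro T hT
      rw [mem_powersetCard] at hT ⊢
      refine ⟨?_, by rw [card_image_of_injective _ f₂.injective, hT.2]⟩
      intro x hx
      obtain ⟨y, _, rfl⟩ := Finset.mem_image.mp hx
      exact Finset.mem_image.mpr ⟨y, mem_univ y, rfl⟩
    · intro T hT
      rw [mem_powersetCard] at hT
      rw [image_preimage]
      refine Finset.filter_true_of_mem fun x hx => ?_
      have : x ∈ (↑SB : Set V) := hT.1 hx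
      rw [hSB] at this
      exact this
    · intro T _
      rw [← Finset.map_eq_image]
      exact Finset.preimage_map f₂ T
    · intro T _
      simp only [hg₂]
      have hco : (↑(T.preimage ⇑f₂ f₂.injective.injOn) : Set V₂) = ⇑f₂ ⁻¹' (↑T : Set V)  :=
        Finset.coe_preimage T f₂.injective.injOn
      rw [hco]
  have hP1 : ∑ W ∈ Finset.powersetCard k (Finset.univ : Finset V), g₁ (W ∩ SA)
      = ∑ i ∈ Finset.range (k + 1), (graphC i G₁ : ℤ) * ((n₂ - t).choose (k - i)) := by
    rw [sum_inter_powersetCard SA k g₁]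
    exact Finset.sum_congr rfl fun i _ => by rw [hSAc, hinner₁ i]
  have hP2 : ∑ W ∈ Finset.powersetCard k (Finset.univ : Finset V), g₂ (W ∩ SB)
      = ∑ i ∈ Finset.range (k + 1), (graphC i G₂ : ℤ) * ((n₁ - t).choose (k - i)) := by
    rw [sum_inter_powersetCard SB k g₂]
    exact Finset.sum_congr rfl fun i _ => by rw [hSBc, hinner₂ i]
  have hP3 : ∑ W ∈ Finset.powersetCard k (Finset.univ : Finset V),
        (if (W ∩ FF).Nonempty then (1 : ℤ) else 0)
      = ((n₁ + n₂ - t).choose k : ℤ) - ((n₁ + n₂ - 2 * t).choose k : ℤ) := by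
    rw [Finset.sum_boole]
    have hsplitc := Finset.card_filter_add_card_filter_not
      (s := Finset.powersetCard k (Finset.univ : Finset V))
      (p := fun W => (W ∩ FF).Nonempty)
    have hneg : (Finset.powersetCard k (Finset.univ : Finset V)).filter
        (fun W => ¬ (W ∩ FF).Nonempty) = Finset.powersetCard k FFᶜ := by
      ext W
      rw [Finset.mem_filter, mem_powersetCard, mem_powersetCard,
        Finset.not_nonempty_iff_eq_empty]
      constructor
      · rintro ⟨⟨-, hk⟩, hemp⟩
        refine ⟨?_, hk⟩
        intro x hx
        rw [Finset.mem_compl]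
        intro hxFF
        exact Finset.notMem_empty x (hemp ▸ Finset.mem_inter.mpr ⟨hx, hxFF⟩)
      · rintro ⟨hsub, hk⟩
        refine ⟨⟨subset_univ _, hk⟩, ?_⟩
        rw [Finset.eq_empty_iff_forall_notMem]
        intro x hx
        rw [Finset.mem_inter] at hx
        exact Finset.mem_compl.mp (hsub hx.1) hx.2
    rw [hneg, Finset.card_powersetCard, Finset.card_powersetCard, card_univ, card_compl,
      hcFF] at hsplitc
    have e1 : Fintype.card V - t = n₁ + n₂ - 2 * t := by omega
    have e2 : Fintype.card V = n₁ + n₂ - t := by omega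
    rw [e1, e2] at hsplitc
    have := congrArg (Nat.cast : ℕ → ℤ) hsplitc
    push_cast at this ⊢
    linarith
  rw [hP1, hP2, hP3, ← Finset.sum_add_distrib]
  ring
end

section
/- Let G₁, G₂ be graphs with n₁, n₂ vertices respectively, and let G be a t-connected sum of G₁ and G₂. Then for every k, b_k(G) = Σ_{i=0}^{k} [b_i(G₁)·C(n₂−t, k−i) + b_i(G₂)·C(n₁−t, k−i)] + C(n₁+n₂−2t, k), where b_k(H) = Σ_{|W|=k} (c(H|_W) − 1) and b_0(H) = −1. -/
open Finset

section AuxCore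
open SimpleGraph

section ConnSumCore

variable {V₁ V₂ V : Type}

structure CS (G₁ : SimpleGraph V₁) (G₂ : SimpleGraph V₂) (G : SimpleGraph V)
    (f₁ : V₁ ↪ V) (f₂ : V₂ ↪ V) (F₁ : Set V₁) (F₂ : Set V₂) : Prop where
  clique₁ : ∀ x ∈ F₁, ∀ y ∈ F₁, x ≠ y → G₁.Adj x y
  clique₂ : ∀ x ∈ F₂, ∀ y ∈ F₂, x ≠ y → G₂.Adj x y
  cover : Set.range f₁ ∪ Set.range f₂ = Set.univ
  inter : Set.range f₁ ∩ Set.range f₂ = f₁ '' F₁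
  eqK : f₁ '' F₁ = f₂ '' F₂
  adj_iff : ∀ a b, G.Adj a b ↔
      ((∃ x y, G₁.Adj x y ∧ f₁ x = a ∧ f₁ y = b) ∨
       (∃ x y, G₂.Adj x y ∧ f₂ x = a ∧ f₂ y = b))

variable {G₁ : SimpleGraph V₁} {G₂ : SimpleGraph V₂} {G : SimpleGraph V}
  {f₁ : V₁ ↪ V} {f₂ : V₂ ↪ V} {F₁ : Set V₁} {F₂ : Set V₂}

lemma CS.symm (h : CS G₁ G₂ G f₁ f₂ F₁ F₂) : CS G₂ G₁ G f₂ f₁ F₂ F₁ where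
  clique₁ := h.clique₂
  clique₂ := h.clique₁
  cover := by rw [Set.union_comm]; exact h.cover
  inter := by rw [Set.inter_comm, h.inter, h.eqK]
  eqK := h.eqK.symm
  adj_iff := fun a b => by rw [h.adj_iff a b, or_comm]

/-- The hom from the induced subgraph on `f₁ ⁻¹' W` to the induced subgraph on `W`. -/
def csHom (h : CS G₁ G₂ G f₁ f₂ F₁ F₂) (W : Set V) :
    G₁.induce (f₁ ⁻¹' W) →g G.induce W where
  toFun := fun x => ⟨f₁ x.1, x.2⟩
  map_rel' := fun {a b} hab => (h.adj_iff _ _).2 (Or.inl ⟨a.1, b.1, hab, rfl, rfl⟩)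

variable {V₁ V₂ V : Type}

/-- `u` and `v` in `W` come from vertices of `G₁` reachable within the induced subgraph. -/
def CSRel (G₁ : SimpleGraph V₁) (f₁ : V₁ ↪ V) (W : Set V) (u v : W) : Prop :=
  ∃ x y : (f₁ ⁻¹' W : Set V₁), f₁ x = (u : V) ∧ f₁ y = (v : V) ∧
    (G₁.induce (f₁ ⁻¹' W)).Reachable x y

/-- `u` can reach (within one of the two sides) a vertex of the glued clique. -/
def CSTK (G₁ : SimpleGraph V₁) (G₂ : SimpleGraph V₂) (f₁ : V₁ ↪ V) (f₂ : V₂ ↪ V)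
    (F₁ : Set V₁) (W : Set V) (u : W) : Prop :=
  ∃ z : W, (z : V) ∈ f₁ '' F₁ ∧ (CSRel G₁ f₁ W u z ∨ CSRel G₂ f₂ W u z)

def CSRR (G₁ : SimpleGraph V₁) (G₂ : SimpleGraph V₂) (f₁ : V₁ ↪ V) (f₂ : V₂ ↪ V)
    (F₁ : Set V₁) (W : Set V) (u v : W) : Prop :=
  CSRel G₁ f₁ W u v ∨ CSRel G₂ f₂ W u v ∨
    (CSTK G₁ G₂ f₁ f₂ F₁ W u ∧ CSTK G₁ G₂ f₁ f₂ F₁ W v)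

variable {G₁ : SimpleGraph V₁} {G₂ : SimpleGraph V₂} {G : SimpleGraph V}
  {f₁ : V₁ ↪ V} {f₂ : V₂ ↪ V} {F₁ : Set V₁} {F₂ : Set V₂} {W : Set V}

lemma CSRel.symm' {u v : W} (h : CSRel G₁ f₁ W u v) : CSRel G₁ f₁ W v u := by
  obtain ⟨x, y, hx, hy, hr⟩ := h; exact ⟨y, x, hy, hx, hr.symm⟩

lemma rel_refl_of_mem {u : W} {x : V₁} (hx : f₁ x = (u : V)) : CSRel G₁ f₁ W u u := by
  have hx' : x ∈ f₁ ⁻¹' W := by simp only [Set.mem_preimage, hx]; exact u.2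
  exact ⟨⟨x, hx'⟩, ⟨x, hx'⟩, hx, hx, Reachable.refl _⟩

lemma tk_swap (h : CS G₁ G₂ G f₁ f₂ F₁ F₂) {u : W} :
    CSTK G₁ G₂ f₁ f₂ F₁ W u ↔ CSTK G₂ G₁ f₂ f₁ F₂ W u := by
  unfold CSTK
  rw [← h.eqK]
  exact exists_congr fun z => and_congr_right fun _ => or_comm

lemma rr_swap (h : CS G₁ G₂ G f₁ f₂ F₁ F₂) {u v : W} :
    CSRR G₁ G₂ f₁ f₂ F₁ W u v ↔ CSRR G₂ G₁ f₂ f₁ F₂ W u v := by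
  unfold CSRR
  rw [tk_swap h, tk_swap h]
  tauto

/-- one-step extension, when the new edge comes from side 1. -/
lemma rr_step_aux (h : CS G₁ G₂ G f₁ f₂ F₁ F₂) {u v t : W}
    (x y : V₁) (hadj : G₁.Adj x y) (hxu : f₁ x = (u : V)) (hyv : f₁ y = (v : V))
    (hR : CSRR G₁ G₂ f₁ f₂ F₁ W v t) : CSRR G₁ G₂ f₁ f₂ F₁ W u t := by
  have hxW : x ∈ f₁ ⁻¹' W := by simp only [Set.mem_preimage, hxu]; exact u.2
  have hyW : y ∈ f₁ ⁻¹' W := by simp only [Set.mem_preimage, hyv]; exact v.2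
  have hadj' : (G₁.induce (f₁ ⁻¹' W)).Adj ⟨x, hxW⟩ ⟨y, hyW⟩ := hadj
  -- a useful fact : CSRel u v
  have hRuv : CSRel G₁ f₁ W u v := ⟨⟨x, hxW⟩, ⟨y, hyW⟩, hxu, hyv, hadj'.reachable⟩
  rcases hR with hrel | hrel | ⟨htkv, htkt⟩
  · -- CSRel₁ v t : compose
    obtain ⟨p, q, hp, hq, hr⟩ := hrel
    have hpy : p = ⟨y, hyW⟩ := Subtype.ext (f₁.injective (by rw [hp, hyv]))
    exact Or.inl ⟨⟨x, hxW⟩, q, hxu, hq, (hadj'.reachable).trans (hpy ▸ hr)⟩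
  · -- CSRel₂ v t : v is in the clique
    obtain ⟨p, q, hp, hq, hr⟩ := hrel
    have hvK : (v : V) ∈ f₁ '' F₁ := by
      rw [← h.inter]
      exact ⟨⟨y, hyv⟩, ⟨p, hp⟩⟩
    refine Or.inr (Or.inr ⟨⟨v, hvK, Or.inl hRuv⟩, ⟨v, hvK, Or.inr ⟨q, p, hq, hp, hr.symm⟩⟩⟩)
  · -- CSTK v ∧ CSTK t : show CSTK u
    refine Or.inr (Or.inr ⟨?_, htkt⟩)
    obtain ⟨z, hzK, hrel | hrel⟩ := htkv
    · obtain ⟨p, q, hp, hq, hr⟩ := hrel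
      have hpy : p = ⟨y, hyW⟩ := Subtype.ext (f₁.injective (by rw [hp, hyv]))
      exact ⟨z, hzK, Or.inl ⟨⟨x, hxW⟩, q, hxu, hq, (hadj'.reachable).trans (hpy ▸ hr)⟩⟩
    · obtain ⟨p, q, hp, hq, hr⟩ := hrel
      have hvK : (v : V) ∈ f₁ '' F₁ := by
        rw [← h.inter]
        exact ⟨⟨y, hyv⟩, ⟨p, hp⟩⟩
      exact ⟨v, hvK, Or.inl hRuv⟩

lemma rr_step (h : CS G₁ G₂ G f₁ f₂ F₁ F₂) {u v t : W}
    (hadj : (G.induce W).Adj u v) (hR : CSRR G₁ G₂ f₁ f₂ F₁ W v t) :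
    CSRR G₁ G₂ f₁ f₂ F₁ W u t := by
  have hadj' : G.Adj (u : V) (v : V) := hadj
  rcases (h.adj_iff _ _).1 hadj' with ⟨x, y, hxy, hx, hy⟩ | ⟨x, y, hxy, hx, hy⟩
  · exact rr_step_aux h x y hxy hx hy hR
  · exact (rr_swap h).2 (rr_step_aux h.symm x y hxy hx hy ((rr_swap h).1 hR))

lemma reachable_rr (h : CS G₁ G₂ G f₁ f₂ F₁ F₂) {u v : W}
    (hr : (G.induce W).Reachable u v) : CSRR G₁ G₂ f₁ f₂ F₁ W u v := by
  obtain ⟨w⟩ := hr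
  induction w with
  | nil =>
    rename_i a
    have : (a : V) ∈ Set.range f₁ ∪ Set.range f₂ := by rw [h.cover]; trivial
    rcases this with ⟨x, hx⟩ | ⟨x, hx⟩
    · exact Or.inl (rel_refl_of_mem hx)
    · exact Or.inr (Or.inl (rel_refl_of_mem hx))
  | cons hadj p ih => exact rr_step h hadj ih

lemma mem_F₁_of_image (hx : f₁ x ∈ f₁ '' F₁) : x ∈ F₁ := by
  obtain ⟨p, hp, hpx⟩ := hx
  rwa [← f₁.injective hpx]

lemma reach_clique₁ (h : CS G₁ G₂ G f₁ f₂ F₁ F₂) {p q : (f₁ ⁻¹' W : Set V₁)}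
    (hp : (p : V₁) ∈ F₁) (hq : (q : V₁) ∈ F₁) :
    (G₁.induce (f₁ ⁻¹' W)).Reachable p q := by
  by_cases hpq : p = q
  · exact hpq ▸ Reachable.refl _
  · have : (G₁.induce (f₁ ⁻¹' W)).Adj p q :=
      h.clique₁ _ hp _ hq (fun e => hpq (Subtype.ext e))
    exact this.reachable

lemma tk_to_clique (h : CS G₁ G₂ G f₁ f₂ F₁ F₂) {u : W}
    (htk : CSTK G₁ G₂ f₁ f₂ F₁ W u) (x : (f₁ ⁻¹' W : Set V₁)) (hx : f₁ x = (u : V)) :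
    ∃ p : (f₁ ⁻¹' W : Set V₁), (p : V₁) ∈ F₁ ∧ (G₁.induce (f₁ ⁻¹' W)).Reachable x p := by
  obtain ⟨z, hzK, hrel | hrel⟩ := htk
  · obtain ⟨p, q, hp, hq, hr⟩ := hrel
    have hpx : p = x := Subtype.ext (f₁.injective (hp.trans hx.symm))
    exact ⟨q, mem_F₁_of_image (hq ▸ hzK), hpx ▸ hr⟩
  · obtain ⟨p, q, hp, hq, hr⟩ := hrel
    have huK : (u : V) ∈ f₁ '' F₁ := by
      rw [← h.inter]; exact ⟨⟨x, hx⟩, ⟨p, hp⟩⟩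
    exact ⟨x, mem_F₁_of_image (hx ▸ huK), Reachable.refl _⟩

lemma rr_to_reach₁ (h : CS G₁ G₂ G f₁ f₂ F₁ F₂) {x y : (f₁ ⁻¹' W : Set V₁)} {u v : W}
    (hx : f₁ x = (u : V)) (hy : f₁ y = (v : V)) (hR : CSRR G₁ G₂ f₁ f₂ F₁ W u v) :
    (G₁.induce (f₁ ⁻¹' W)).Reachable x y := by
  rcases hR with hrel | hrel | ⟨htku, htkv⟩
  · obtain ⟨p, q, hp, hq, hr⟩ := hrel
    have hpx : p = x := Subtype.ext (f₁.injective (hp.trans hx.symm))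
    have hqy : q = y := Subtype.ext (f₁.injective (hq.trans hy.symm))
    exact hpx ▸ hqy ▸ hr
  · obtain ⟨p, q, hp, hq, hr⟩ := hrel
    have huK : (u : V) ∈ f₁ '' F₁ := by
      rw [← h.inter]; exact ⟨⟨x, hx⟩, ⟨p, hp⟩⟩
    have hvK : (v : V) ∈ f₁ '' F₁ := by
      rw [← h.inter]; exact ⟨⟨y, hy⟩, ⟨q, hq⟩⟩
    exact reach_clique₁ h (mem_F₁_of_image (hx ▸ huK)) (mem_F₁_of_image (hy ▸ hvK))
  · obtain ⟨p, hpF, hrp⟩ := tk_to_clique h htku x hx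
    obtain ⟨q, hqF, hrq⟩ := tk_to_clique h htkv y hy
    exact (hrp.trans (reach_clique₁ h hpF hqF)).trans hrq.symm

lemma rel_to_reach (h : CS G₁ G₂ G f₁ f₂ F₁ F₂) {u v : W}
    (hrel : CSRel G₁ f₁ W u v) : (G.induce W).Reachable u v := by
  obtain ⟨x, y, hx, hy, hr⟩ := hrel
  have := hr.map (csHom h W)
  rwa [show csHom h W x = u from Subtype.ext hx,
       show csHom h W y = v from Subtype.ext hy] at this

lemma map_inj (h : CS G₁ G₂ G f₁ f₂ F₁ F₂) :
    Function.Injective (ConnectedComponent.map (csHom h W)) := by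
  intro c c'
  refine ConnectedComponent.ind₂ (fun x y hxy => ?_) c c'
  rw [ConnectedComponent.map_mk, ConnectedComponent.map_mk] at hxy
  have hr : (G.induce W).Reachable (csHom h W x) (csHom h W y) :=
    ConnectedComponent.eq.1 hxy
  exact ConnectedComponent.sound (rr_to_reach₁ h rfl rfl (reachable_rr h hr))

lemma map_cross (h : CS G₁ G₂ G f₁ f₂ F₁ F₂)
    {c₁ : (G₁.induce (f₁ ⁻¹' W)).ConnectedComponent}
    {c₂ : (G₂.induce (f₂ ⁻¹' W)).ConnectedComponent}
    (heq : ConnectedComponent.map (csHom h W) c₁ =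
      ConnectedComponent.map (csHom h.symm W) c₂) :
    ∃ z : W, (z : V) ∈ f₁ '' F₁ ∧
      ConnectedComponent.map (csHom h W) c₁ = (G.induce W).connectedComponentMk z := by
  revert heq
  refine ConnectedComponent.ind (fun x => ?_) c₁
  refine ConnectedComponent.ind (fun y heq => ?_) c₂
  rw [ConnectedComponent.map_mk, ConnectedComponent.map_mk] at heq
  have hr : (G.induce W).Reachable (csHom h W x) (csHom h.symm W y) :=
    ConnectedComponent.eq.1 heq
  rcases reachable_rr h hr with hrel | hrel | ⟨htku, _⟩
  · -- the endpoint (csHom h.symm W y) is in the image of f₁, hence in K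
    obtain ⟨p, q, hp, hq, hrr⟩ := hrel
    have hvK : ((csHom h.symm W y : W) : V) ∈ f₁ '' F₁ := by
      rw [← h.inter]; exact ⟨⟨q, hq⟩, ⟨y, rfl⟩⟩
    exact ⟨csHom h.symm W y, hvK, ConnectedComponent.sound hr⟩
  · obtain ⟨p, q, hp, hq, hrr⟩ := hrel
    have huK : ((csHom h W x : W) : V) ∈ f₁ '' F₁ := by
      rw [← h.inter]; exact ⟨⟨x, rfl⟩, ⟨p, hp⟩⟩
    exact ⟨csHom h W x, huK, rfl⟩
  · obtain ⟨z, hzK, hrel⟩ := htku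
    refine ⟨z, hzK, ConnectedComponent.sound ?_⟩
    rcases hrel with hrel | hrel
    · exact rel_to_reach h hrel
    · exact rel_to_reach h.symm hrel

lemma K_reach (h : CS G₁ G₂ G f₁ f₂ F₁ F₂) {z z' : W}
    (hz : (z : V) ∈ f₁ '' F₁) (hz' : (z' : V) ∈ f₁ '' F₁) :
    (G.induce W).Reachable z z' := by
  by_cases hzz : z = z'
  · exact hzz ▸ Reachable.refl _
  · obtain ⟨p, hp, hpz⟩ := hz
    obtain ⟨q, hq, hqz⟩ := hz'
    have hpq : p ≠ q := fun e => hzz (Subtype.ext (by rw [← hpz, ← hqz, e]))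
    have : (G.induce W).Adj z z' :=
      (h.adj_iff _ _).2 (Or.inl ⟨p, q, h.clique₁ _ hp _ hq hpq, hpz, hqz⟩)
    exact this.reachable


variable [Finite V₁] [Finite V₂] [Finite V]

lemma surj_aux (h : CS G₁ G₂ G f₁ f₂ F₁ F₂) (u : W) :
    (∃ x : (f₁ ⁻¹' W : Set V₁),
      ConnectedComponent.map (csHom h W) ((G₁.induce (f₁ ⁻¹' W)).connectedComponentMk x)
        = (G.induce W).connectedComponentMk u) ∨
    (∃ y : (f₂ ⁻¹' W : Set V₂),
      ConnectedComponent.map (csHom h.symm W) ((G₂.induce (f₂ ⁻¹' W)).connectedComponentMk y)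
        = (G.induce W).connectedComponentMk u) := by
  have hu : (u : V) ∈ Set.range f₁ ∪ Set.range f₂ := by rw [h.cover]; trivial
  rcases hu with ⟨x, hx⟩ | ⟨y, hy⟩
  · have hxW : x ∈ f₁ ⁻¹' W := by simp only [Set.mem_preimage, hx]; exact u.2
    refine Or.inl ⟨⟨x, hxW⟩, ?_⟩
    rw [ConnectedComponent.map_mk]
    exact congrArg _ (Subtype.ext hx)
  · have hyW : y ∈ f₂ ⁻¹' W := by simp only [Set.mem_preimage, hy]; exact u.2
    refine Or.inr ⟨⟨y, hyW⟩, ?_⟩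
    rw [ConnectedComponent.map_mk]
    exact congrArg _ (Subtype.ext hy)

lemma card_comp_empty (h : CS G₁ G₂ G f₁ f₂ F₁ F₂) (hK : ¬ (W ∩ f₁ '' F₁).Nonempty) :
    Nat.card (G₁.induce (f₁ ⁻¹' W)).ConnectedComponent
      + Nat.card (G₂.induce (f₂ ⁻¹' W)).ConnectedComponent
      = Nat.card (G.induce W).ConnectedComponent := by
  have hbij : Function.Bijective
      (Sum.elim (ConnectedComponent.map (csHom h W))
        (ConnectedComponent.map (csHom h.symm W))) := by
    constructor
    · rintro (c | c) (d | d) hcd <;>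
        simp only [Sum.elim_inl, Sum.elim_inr] at hcd
      · exact congrArg Sum.inl (map_inj h hcd)
      · obtain ⟨z, hzK, -⟩ := map_cross h hcd
        exact absurd ⟨(z : V), z.2, hzK⟩ hK
      · obtain ⟨z, hzK, -⟩ := map_cross h hcd.symm
        exact absurd ⟨(z : V), z.2, hzK⟩ hK
      · exact congrArg Sum.inr (map_inj h.symm hcd)
    · intro d
      refine ConnectedComponent.ind (fun u => ?_) d
      rcases surj_aux h u with ⟨x, hx⟩ | ⟨y, hy⟩
      · exact ⟨Sum.inl _, hx⟩
      · exact ⟨Sum.inr _, hy⟩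
  have hcard := Nat.card_eq_of_bijective _ hbij
  rwa [Nat.card_sum] at hcard

lemma card_comp_pos (h : CS G₁ G₂ G f₁ f₂ F₁ F₂) (hK : (W ∩ f₁ '' F₁).Nonempty) :
    Nat.card (G₁.induce (f₁ ⁻¹' W)).ConnectedComponent
      + Nat.card (G₂.induce (f₂ ⁻¹' W)).ConnectedComponent
      = Nat.card (G.induce W).ConnectedComponent + 1 := by
  classical
  obtain ⟨k₀, hk₀W, hk₀K⟩ := hK
  let u₀ : W := ⟨k₀, hk₀W⟩
  let C₀ := (G.induce W).connectedComponentMk u₀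
  let m₁ := ConnectedComponent.map (csHom h W)
  let m₂ := ConnectedComponent.map (csHom h.symm W)
  have hcross : ∀ c d, m₁ c = m₂ d → m₂ d = C₀ := by
    intro c d hcd
    obtain ⟨z, hzK, hz⟩ := map_cross h hcd
    calc m₂ d = m₁ c := hcd.symm
    _ = (G.induce W).connectedComponentMk z := hz
    _ = C₀ := ConnectedComponent.sound (K_reach h hzK hk₀K)
  have hbij : Function.Bijective
      (Sum.elim (fun c => (Sum.inl (m₁ c) : (G.induce W).ConnectedComponent ⊕ Unit))
        (fun c => if m₂ c = C₀ then Sum.inr () else Sum.inl (m₂ c))) := by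
    constructor
    · rintro (c | c) (d | d) hcd <;>
        simp only [Sum.elim_inl, Sum.elim_inr] at hcd
      · exact congrArg Sum.inl (map_inj h (Sum.inl.inj hcd))
      · by_cases hd : m₂ d = C₀
        · rw [if_pos hd] at hcd; exact absurd hcd (by simp)
        · rw [if_neg hd] at hcd
          exact absurd (hcross c d (Sum.inl.inj hcd)) hd
      · by_cases hc : m₂ c = C₀
        · rw [if_pos hc] at hcd; exact absurd hcd (by simp)
        · rw [if_neg hc] at hcd
          exact absurd (hcross d c (Sum.inl.inj hcd).symm) hc
      · by_cases hc : m₂ c = C₀ <;> by_cases hd : m₂ d = C₀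
        · exact congrArg Sum.inr (map_inj h.symm (hc.trans hd.symm))
        · rw [if_pos hc, if_neg hd] at hcd; exact absurd hcd (by simp)
        · rw [if_neg hc, if_pos hd] at hcd; exact absurd hcd (by simp)
        · rw [if_neg hc, if_neg hd] at hcd
          exact congrArg Sum.inr (map_inj h.symm (Sum.inl.inj hcd))
    · rintro (d | ⟨⟩)
      · refine ConnectedComponent.ind (fun u => ?_) d
        rcases surj_aux h u with ⟨x, hx⟩ | ⟨y, hy⟩
        · exact ⟨Sum.inl _, congrArg Sum.inl hx⟩
        · by_cases hc : m₂ ((G₂.induce (f₂ ⁻¹' W)).connectedComponentMk y) = C₀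
          · -- the component of u is C₀; hit inl C₀ from side 1 via k₀
            obtain ⟨p, hpF, hpk⟩ := hk₀K
            have hpW : p ∈ f₁ ⁻¹' W := by simp only [Set.mem_preimage, hpk]; exact hk₀W
            refine ⟨Sum.inl ((G₁.induce (f₁ ⁻¹' W)).connectedComponentMk ⟨p, hpW⟩), ?_⟩
            simp only [Sum.elim_inl]
            refine congrArg Sum.inl ?_
            calc m₁ ((G₁.induce (f₁ ⁻¹' W)).connectedComponentMk ⟨p, hpW⟩)
                = (G.induce W).connectedComponentMk ⟨f₁ p, hpW⟩ := ConnectedComponent.map_mk _ _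
              _ = C₀ := congrArg _ (Subtype.ext hpk)
              _ = m₂ ((G₂.induce (f₂ ⁻¹' W)).connectedComponentMk y) := hc.symm
              _ = (G.induce W).connectedComponentMk u := hy
          · refine ⟨Sum.inr ((G₂.induce (f₂ ⁻¹' W)).connectedComponentMk y), ?_⟩
            simp only [Sum.elim_inr, if_neg hc]
            exact congrArg Sum.inl hy
      · have hk₀K' : k₀ ∈ f₂ '' F₂ := h.eqK ▸ hk₀K
        obtain ⟨y, hyF, hyk⟩ := hk₀K'
        have hyW : y ∈ f₂ ⁻¹' W := by simp only [Set.mem_preimage, hyk]; exact hk₀W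
        refine ⟨Sum.inr ((G₂.induce (f₂ ⁻¹' W)).connectedComponentMk ⟨y, hyW⟩), ?_⟩
        have hm : m₂ ((G₂.induce (f₂ ⁻¹' W)).connectedComponentMk ⟨y, hyW⟩) = C₀ := by
          calc m₂ ((G₂.induce (f₂ ⁻¹' W)).connectedComponentMk ⟨y, hyW⟩)
              = (G.induce W).connectedComponentMk ⟨f₂ y, hyW⟩ := ConnectedComponent.map_mk _ _
            _ = C₀ := congrArg _ (Subtype.ext hyk)
        simp only [Sum.elim_inr, if_pos hm]
  have hcard := Nat.card_eq_of_bijective _ hbij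
  rw [Nat.card_sum, Nat.card_sum] at hcard
  have hone : Nat.card Unit = 1 := Nat.card_unique
  rw [hone] at hcard
  exact hcard

end ConnSumCore

end AuxCore

lemma finset_inter_union_sdiff {V : Type} [DecidableEq V] (W A : Finset V) :
    W ∩ A ∪ W \ A = W := by
  ext x; simp only [mem_union, mem_inter, mem_sdiff]; tauto

lemma sum_inter_eq {V : Type} [Fintype V] [DecidableEq V] (A : Finset V)
    (g : Finset V → ℤ) (k : ℕ) :
    ∑ W ∈ powersetCard k (univ : Finset V), g (W ∩ A)
      = ∑ i ∈ range (k + 1),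
          (∑ U ∈ powersetCard i A, g U) * ((Aᶜ.card).choose (k - i) : ℤ) := by
  have h1 : ∀ i ∈ range (k + 1),
      (∑ U ∈ powersetCard i A, g U) * ((Aᶜ.card).choose (k - i) : ℤ)
        = ∑ U ∈ powersetCard i A, ∑ T ∈ powersetCard (k - i) Aᶜ, g U := by
    intro i _
    rw [sum_mul]
    refine sum_congr rfl fun U _ => ?_
    rw [sum_const, card_powersetCard, nsmul_eq_mul, mul_comm]
  rw [sum_congr rfl h1]
  have h2 : ∑ p ∈ (range (k + 1)).sigma
        (fun i => powersetCard i A ×ˢ powersetCard (k - i) Aᶜ), g p.2.1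
      = ∑ i ∈ range (k + 1), ∑ U ∈ powersetCard i A,
          ∑ T ∈ powersetCard (k - i) Aᶜ, g U := by
    rw [sum_sigma]
    exact sum_congr rfl fun i _ => by rw [sum_product]
  rw [← h2]
  refine sum_nbij' (fun W => ⟨(W ∩ A).card, (W ∩ A, W \ A)⟩)
    (fun p => p.2.1 ∪ p.2.2) ?_ ?_ ?_ ?_ ?_
  · intro W hW
    rw [mem_powersetCard] at hW
    have hsplit : (W ∩ A).card + (W \ A).card = k := by
      rw [card_inter_add_card_sdiff, hW.2]
    refine mem_sigma.2 ⟨?_, ?_⟩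
    · show (W ∩ A).card ∈ range (k + 1)
      exact mem_range.2 (by omega)
    · show (W ∩ A, W \ A) ∈
        powersetCard (W ∩ A).card A ×ˢ powersetCard (k - (W ∩ A).card) Aᶜ
      refine mem_product.2 ⟨?_, ?_⟩
      · exact mem_powersetCard.2 ⟨inter_subset_right, rfl⟩
      · refine mem_powersetCard.2 ⟨fun x hx => mem_compl.2 (mem_sdiff.1 hx).2, ?_⟩
        show (W \ A).card = k - (W ∩ A).card
        omega
  · rintro ⟨i, U, T⟩ hp
    rw [mem_sigma, mem_product, mem_powersetCard, mem_powersetCard, mem_range] at hp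
    obtain ⟨hik, ⟨hUA, hUc⟩, hTA, hTc⟩ := hp
    refine mem_powersetCard.2 ⟨subset_univ _, ?_⟩
    rw [card_union_of_disjoint]
    · omega
    · exact Finset.disjoint_left.2 fun x hxU hxT => (mem_compl.1 (hTA hxT)) (hUA hxU)
  · intro W _
    exact finset_inter_union_sdiff W A
  · rintro ⟨i, U, T⟩ hp
    rw [mem_sigma, mem_product, mem_powersetCard, mem_powersetCard, mem_range] at hp
    obtain ⟨hik, ⟨hUA, hUc⟩, hTA, hTc⟩ := hp
    have hUA' : (U ∪ T) ∩ A = U := by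
      ext x
      simp only [mem_inter, mem_union]
      constructor
      · rintro ⟨hx | hx, hxA⟩
        · exact hx
        · exact absurd hxA (mem_compl.1 (hTA hx))
      · intro hx; exact ⟨Or.inl hx, hUA hx⟩
    have hTA' : (U ∪ T) \ A = T := by
      ext x
      simp only [mem_sdiff, mem_union]
      constructor
      · rintro ⟨hx | hx, hxA⟩
        · exact absurd (hUA hx) hxA
        · exact hx
      · intro hx; exact ⟨Or.inr hx, mem_compl.1 (hTA hx)⟩
    dsimp only at hUc hTc ⊢
    rw [hUA', hTA']
    subst hUc
    rfl
  · intro W _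
    rfl

lemma sum_powersetCard_image {V₁ V : Type} [Fintype V₁] [DecidableEq V₁]
    [Fintype V] [DecidableEq V] (f₁ : V₁ ↪ V) (g : Finset V → ℤ) (gb : Finset V₁ → ℤ)
    (i : ℕ) (hco : ∀ S : Finset V₁, g (S.image f₁) = gb S) :
    ∑ U ∈ powersetCard i ((univ : Finset V₁).image f₁), g U
      = ∑ S ∈ powersetCard i (univ : Finset V₁), gb S := by
  have himg : ∀ U : Finset V, U ⊆ (univ : Finset V₁).image f₁ →
      (U.preimage f₁ (f₁.injective.injOn)).image f₁ = U := by
    intro U hU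
    ext x
    simp only [Finset.mem_image, Finset.mem_preimage]
    constructor
    · rintro ⟨a, ha, rfl⟩; exact ha
    · intro hx
      obtain ⟨a, -, rfl⟩ := Finset.mem_image.1 (hU hx)
      exact ⟨a, hx, rfl⟩
  refine sum_nbij' (fun U => U.preimage f₁ (f₁.injective.injOn)) (fun S => S.image f₁)
    ?_ ?_ ?_ ?_ ?_
  · intro U hU
    rw [mem_powersetCard] at hU
    refine mem_powersetCard.2 ⟨subset_univ _, ?_⟩
    have hc := congrArg Finset.card (himg U hU.1)
    rw [card_image_of_injective _ f₁.injective] at hc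
    exact hc.trans hU.2
  · intro S hS
    rw [mem_powersetCard] at hS
    refine mem_powersetCard.2 ⟨image_subset_image (subset_univ _), ?_⟩
    rw [card_image_of_injective _ f₁.injective]
    exact hS.2
  · intro U hU
    exact himg U (mem_powersetCard.1 hU).1
  · intro S _
    ext x
    simp [Finset.mem_preimage, Finset.mem_image, f₁.injective.eq_iff]
  · intro U hU
    rw [← hco, himg U (mem_powersetCard.1 hU).1]

section MainProof
open SimpleGraph

theorem bk_connSum' {V₁ V₂ V : Type} [Fintype V₁] [DecidableEq V₁] [Fintype V₂] [DecidableEq V₂]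
    [Fintype V] [DecidableEq V] (t k n₁ n₂ : ℕ)
    (G₁ : SimpleGraph V₁) (G₂ : SimpleGraph V₂) (G : SimpleGraph V)
    (hn₁ : Fintype.card V₁ = n₁) (hn₂ : Fintype.card V₂ = n₂)
    (h : ∃ (f₁ : V₁ ↪ V) (f₂ : V₂ ↪ V) (F₁ : Set V₁) (F₂ : Set V₂),
      Nat.card F₁ = t ∧ Nat.card F₂ = t ∧
      (∀ x ∈ F₁, ∀ y ∈ F₁, x ≠ y → G₁.Adj x y) ∧
      (∀ x ∈ F₂, ∀ y ∈ F₂, x ≠ y → G₂.Adj x y) ∧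
      Set.range f₁ ∪ Set.range f₂ = Set.univ ∧
      Set.range f₁ ∩ Set.range f₂ = f₁ '' F₁ ∧
      f₁ '' F₁ = f₂ '' F₂ ∧
      (∀ a b, G.Adj a b ↔
        ((∃ x y, G₁.Adj x y ∧ f₁ x = a ∧ f₁ y = b) ∨
         (∃ x y, G₂.Adj x y ∧ f₂ x = a ∧ f₂ y = b)))) :
    (∑ W ∈ Finset.powersetCard k (Finset.univ : Finset V),
        ((Nat.card (G.induce (W : Set V)).ConnectedComponent : ℤ) - 1)) =
      (∑ i ∈ Finset.range (k + 1),
        ((∑ W ∈ Finset.powersetCard i (Finset.univ : Finset V₁),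
            ((Nat.card (G₁.induce (W : Set V₁)).ConnectedComponent : ℤ) - 1))
              * ((n₂ - t).choose (k - i)) +
         (∑ W ∈ Finset.powersetCard i (Finset.univ : Finset V₂),
            ((Nat.card (G₂.induce (W : Set V₂)).ConnectedComponent : ℤ) - 1))
              * ((n₁ - t).choose (k - i))))
      + ((n₁ + n₂ - 2 * t).choose k) := by
  classical
  obtain ⟨f₁, f₂, F₁, F₂, ht₁, ht₂, hc₁, hc₂, hcov, hint, heqK, hadj⟩ := h
  have hcs : CS G₁ G₂ G f₁ f₂ F₁ F₂ := ⟨hc₁, hc₂, hcov, hint, heqK, hadj⟩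
  set A : Finset V := (univ : Finset V₁).image f₁ with hA
  set B : Finset V := (univ : Finset V₂).image f₂ with hB
  set Kf : Finset V := ((Set.toFinite F₁).toFinset).image f₁ with hKf
  have hcoeA : (A : Set V) = Set.range f₁ := by
    rw [hA, coe_image, coe_univ, Set.image_univ]
  have hcoeB : (B : Set V) = Set.range f₂ := by
    rw [hB, coe_image, coe_univ, Set.image_univ]
  have hcoeK : (Kf : Set V) = f₁ '' F₁ := by
    rw [hKf, coe_image, Set.Finite.coe_toFinset]
  have hAB : A ∪ B = (univ : Finset V) :=
    coe_injective (by rw [coe_union, hcoeA, hcoeB, hcov, coe_univ])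
  have hABK : A ∩ B = Kf :=
    coe_injective (by rw [coe_inter, hcoeA, hcoeB, hint, hcoeK])
  have hcardA : A.card = n₁ := by
    rw [hA, card_image_of_injective _ f₁.injective, card_univ, hn₁]
  have hcardB : B.card = n₂ := by
    rw [hB, card_image_of_injective _ f₂.injective, card_univ, hn₂]
  have hcardK : Kf.card = t := by
    rw [hKf, card_image_of_injective _ f₁.injective, ← ht₁,
      Nat.card_coe_set_eq, Set.ncard_eq_toFinset_card F₁ (Set.toFinite F₁)]
  have htn₁ : t ≤ n₁ := by
    rw [← hcardK, ← hcardA]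
    exact card_le_card (by rw [← hABK]; exact inter_subset_left)
  have htn₂ : t ≤ n₂ := by
    rw [← hcardK, ← hcardB]
    exact card_le_card (by rw [← hABK]; exact inter_subset_right)
  have hVcard : Fintype.card V + t = n₁ + n₂ := by
    have hcui := card_union_add_card_inter A B
    rw [hAB, hABK, card_univ, hcardA, hcardB, hcardK] at hcui
    exact hcui
  have hcardAc : Aᶜ.card = n₂ - t := by rw [card_compl, hcardA]; omega
  have hcardBc : Bᶜ.card = n₁ - t := by rw [card_compl, hcardB]; omega
  have hcardKc : Kfᶜ.card = n₁ + n₂ - 2 * t := by rw [card_compl, hcardK]; omega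
  -- pointwise component count
  have hpoint : ∀ W : Finset V,
      ((Nat.card (G.induce (W : Set V)).ConnectedComponent : ℤ) - 1)
        = ((Nat.card (G₁.induce (f₁ ⁻¹' (W : Set V))).ConnectedComponent : ℤ) - 1)
          + ((Nat.card (G₂.induce (f₂ ⁻¹' (W : Set V))).ConnectedComponent : ℤ) - 1)
          + (if W ∩ Kf = ∅ then 1 else 0) := by
    intro W
    by_cases hW : (((W : Finset V) : Set V) ∩ f₁ '' F₁).Nonempty
    · have hc := card_comp_pos (W := ((W : Finset V) : Set V)) hcs hW
      have hne : W ∩ Kf ≠ ∅ := by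
        obtain ⟨x, hx1, hx2⟩ := hW
        intro hemp
        have hmem : x ∈ W ∩ Kf := mem_inter.2 ⟨mem_coe.1 hx1, by
          rw [← mem_coe, hcoeK]; exact hx2⟩
        rw [hemp] at hmem
        exact notMem_empty x hmem
      rw [if_neg hne]
      have hci := congrArg (Nat.cast (R := ℤ)) hc
      push_cast at hci
      linarith
    · have hc := card_comp_empty (W := ((W : Finset V) : Set V)) hcs hW
      have heq : W ∩ Kf = ∅ := by
        by_contra hne
        obtain ⟨x, hx⟩ := nonempty_iff_ne_empty.2 hne
        rw [mem_inter] at hx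
        exact hW ⟨x, mem_coe.2 hx.1, by rw [← hcoeK]; exact mem_coe.2 hx.2⟩
      rw [if_pos heq]
      have hci := congrArg (Nat.cast (R := ℤ)) hc
      push_cast at hci
      linarith
  rw [sum_congr rfl (fun W _ => hpoint W), sum_add_distrib, sum_add_distrib]
  -- preimage facts
  have hpre₁ : ∀ W : Finset V, f₁ ⁻¹' ((W ∩ A : Finset V) : Set V) = f₁ ⁻¹' (W : Set V) := by
    intro W
    rw [coe_inter]
    ext x
    simp only [Set.mem_preimage, Set.mem_inter_iff]
    exact ⟨fun hx => hx.1, fun hx => ⟨hx, by rw [hcoeA]; exact ⟨x, rfl⟩⟩⟩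
  have hpre₂ : ∀ W : Finset V, f₂ ⁻¹' ((W ∩ B : Finset V) : Set V) = f₂ ⁻¹' (W : Set V) := by
    intro W
    rw [coe_inter]
    ext x
    simp only [Set.mem_preimage, Set.mem_inter_iff]
    exact ⟨fun hx => hx.1, fun hx => ⟨hx, by rw [hcoeB]; exact ⟨x, rfl⟩⟩⟩
  have hpim₁ : ∀ S : Finset V₁, f₁ ⁻¹' ((S.image f₁ : Finset V) : Set V) = (S : Set V₁) := by
    intro S
    ext x
    rw [coe_image]
    simp only [Set.mem_preimage]
    exact (f₁.injective.mem_set_image)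
  have hpim₂ : ∀ S : Finset V₂, f₂ ⁻¹' ((S.image f₂ : Finset V) : Set V) = (S : Set V₂) := by
    intro S
    ext x
    rw [coe_image]
    simp only [Set.mem_preimage]
    exact (f₂.injective.mem_set_image)
  have hsum1 : ∑ W ∈ powersetCard k (univ : Finset V),
      ((Nat.card (G₁.induce (f₁ ⁻¹' (W : Set V))).ConnectedComponent : ℤ) - 1)
      = ∑ i ∈ range (k + 1),
          (∑ S ∈ powersetCard i (univ : Finset V₁),
            ((Nat.card (G₁.induce (S : Set V₁)).ConnectedComponent : ℤ) - 1))
            * ((n₂ - t).choose (k - i) : ℤ) := by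
    calc ∑ W ∈ powersetCard k (univ : Finset V),
        ((Nat.card (G₁.induce (f₁ ⁻¹' (W : Set V))).ConnectedComponent : ℤ) - 1)
        = ∑ W ∈ powersetCard k (univ : Finset V),
          ((Nat.card (G₁.induce (f₁ ⁻¹' ((W ∩ A : Finset V) : Set V))).ConnectedComponent : ℤ) - 1) :=
          sum_congr rfl fun W _ => by rw [hpre₁ W]
      _ = ∑ i ∈ range (k + 1),
          (∑ U ∈ powersetCard i A,
            ((Nat.card (G₁.induce (f₁ ⁻¹' (U : Set V))).ConnectedComponent : ℤ) - 1))
            * ((Aᶜ.card).choose (k - i) : ℤ) :=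
          sum_inter_eq A (fun U => (Nat.card (G₁.induce (f₁ ⁻¹' (U : Set V))).ConnectedComponent : ℤ) - 1) k
      _ = _ := by
          refine sum_congr rfl fun i _ => ?_
          rw [hcardAc]
          congr 1
          rw [hA]
          exact sum_powersetCard_image f₁ _
            (fun S => (Nat.card (G₁.induce (S : Set V₁)).ConnectedComponent : ℤ) - 1) i
            (fun S => by rw [hpim₁ S])
  have hsum2 : ∑ W ∈ powersetCard k (univ : Finset V),
      ((Nat.card (G₂.induce (f₂ ⁻¹' (W : Set V))).ConnectedComponent : ℤ) - 1)
      = ∑ i ∈ range (k + 1),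
          (∑ S ∈ powersetCard i (univ : Finset V₂),
            ((Nat.card (G₂.induce (S : Set V₂)).ConnectedComponent : ℤ) - 1))
            * ((n₁ - t).choose (k - i) : ℤ) := by
    calc ∑ W ∈ powersetCard k (univ : Finset V),
        ((Nat.card (G₂.induce (f₂ ⁻¹' (W : Set V))).ConnectedComponent : ℤ) - 1)
        = ∑ W ∈ powersetCard k (univ : Finset V),
          ((Nat.card (G₂.induce (f₂ ⁻¹' ((W ∩ B : Finset V) : Set V))).ConnectedComponent : ℤ) - 1) :=
          sum_congr rfl fun W _ => by rw [hpre₂ W]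
      _ = ∑ i ∈ range (k + 1),
          (∑ U ∈ powersetCard i B,
            ((Nat.card (G₂.induce (f₂ ⁻¹' (U : Set V))).ConnectedComponent : ℤ) - 1))
            * ((Bᶜ.card).choose (k - i) : ℤ) :=
          sum_inter_eq B (fun U => (Nat.card (G₂.induce (f₂ ⁻¹' (U : Set V))).ConnectedComponent : ℤ) - 1) k
      _ = _ := by
          refine sum_congr rfl fun i _ => ?_
          rw [hcardBc]
          congr 1
          rw [hB]
          exact sum_powersetCard_image f₂ _
            (fun S => (Nat.card (G₂.induce (S : Set V₂)).ConnectedComponent : ℤ) - 1) i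
            (fun S => by rw [hpim₂ S])
  have hsum3 : (∑ W ∈ powersetCard k (univ : Finset V), if W ∩ Kf = ∅ then (1 : ℤ) else 0)
      = ((n₁ + n₂ - 2 * t).choose k : ℤ) := by
    rw [sum_boole]
    have hfil : filter (fun W => W ∩ Kf = ∅) (powersetCard k (univ : Finset V))
        = powersetCard k Kfᶜ := by
      ext W
      simp only [mem_filter, mem_powersetCard, subset_univ, true_and]
      constructor
      · rintro ⟨hk, hemp⟩
        refine ⟨fun x hx => mem_compl.2 fun hxK => ?_, hk⟩
        have hmem : x ∈ W ∩ Kf := mem_inter.2 ⟨hx, hxK⟩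
        rw [hemp] at hmem
        exact notMem_empty x hmem
      · rintro ⟨hsub, hk⟩
        refine ⟨hk, eq_empty_iff_forall_notMem.2 fun x hx => ?_⟩
        rw [mem_inter] at hx
        exact (mem_compl.1 (hsub hx.1)) hx.2
    rw [hfil, card_powersetCard, hcardKc]
  rw [hsum1, hsum2, hsum3, ← sum_add_distrib]

end MainProof

/-- the formula for `b_k` of a `t`-connected sum of two graphs. -/
theorem bk_connSum {V₁ V₂ V : Type} [Fintype V₁] [DecidableEq V₁] [Fintype V₂] [DecidableEq V₂]
    [Fintype V] [DecidableEq V] (t k n₁ n₂ : ℕ)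
    (G₁ : SimpleGraph V₁) (G₂ : SimpleGraph V₂) (G : SimpleGraph V)
    (hn₁ : Fintype.card V₁ = n₁) (hn₂ : Fintype.card V₂ = n₂)
    (h : IsConnSum t G₁ G₂ G) :
    graphB k G =
      (∑ i ∈ Finset.range (k + 1),
        (graphB i G₁ * ((n₂ - t).choose (k - i)) +
         graphB i G₂ * ((n₁ - t).choose (k - i))))
      + ((n₁ + n₂ - 2 * t).choose k) := by
  exact bk_connSum' t k n₁ n₂ G₁ G₂ G hn₁ hn₂ h
end

section
/- If G and H are both t-connected sums of the same sequence of graphs G₁, G₂, …, G_n (possibly with different choices of gluing sets and relabelings), then b_k(G) = b_k(H) for all k. -/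
open Finset

open SimpleGraph in

open scoped Classical in
lemma keyCount {V₁ V₂ V : Type} [Finite V]
    (G₁ : SimpleGraph V₁) (G₂ : SimpleGraph V₂) (G : SimpleGraph V)
    (f₁ : V₁ ↪ V) (f₂ : V₂ ↪ V) (F₁ : Set V₁) (F₂ : Set V₂)
    (hc₁ : ∀ x ∈ F₁, ∀ y ∈ F₁, x ≠ y → G₁.Adj x y)
    (hc₂ : ∀ x ∈ F₂, ∀ y ∈ F₂, x ≠ y → G₂.Adj x y)
    (hcov : Set.range f₁ ∪ Set.range f₂ = Set.univ)
    (hint : Set.range f₁ ∩ Set.range f₂ = f₁ '' F₁)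
    (him : f₁ '' F₁ = f₂ '' F₂)
    (hadj : ∀ a b, G.Adj a b ↔
      ((∃ x y, G₁.Adj x y ∧ f₁ x = a ∧ f₁ y = b) ∨
       (∃ x y, G₂.Adj x y ∧ f₂ x = a ∧ f₂ y = b)))
    (W : Set V) :
    Nat.card (G.induce W).ConnectedComponent
      + (if (W ∩ f₁ '' F₁).Nonempty then 1 else 0)
    = Nat.card (G₁.induce (f₁ ⁻¹' W)).ConnectedComponent
      + Nat.card (G₂.induce (f₂ ⁻¹' W)).ConnectedComponent := by
  classical
  haveI : Finite V₁ := Finite.of_injective f₁ f₁.injective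
  haveI : Finite V₂ := Finite.of_injective f₂ f₂.injective
  set mk1 := (G₁.induce (f₁ ⁻¹' W)).connectedComponentMk with hmk1
  set mk2 := (G₂.induce (f₂ ⁻¹' W)).connectedComponentMk with hmk2
  set mkG := (G.induce W).connectedComponentMk with hmkG
  -- basic membership facts
  have hmem₂ : ∀ a : V, a ∉ Set.range f₁ → a ∈ Set.range f₂ := by
    intro a ha
    have : a ∈ Set.range f₁ ∪ Set.range f₂ := by rw [hcov]; trivial
    exact this.resolve_left ha
  have hboth₁ : ∀ x y, f₁ x = f₂ y → x ∈ F₁ := by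
    intro x y h
    have : f₁ x ∈ f₁ '' F₁ := by
      rw [← hint]; exact ⟨⟨x, rfl⟩, ⟨y, h.symm⟩⟩
    obtain ⟨x', hx', he⟩ := this
    rwa [← f₁.injective he]
  have hboth₂ : ∀ x y, f₁ x = f₂ y → y ∈ F₂ := by
    intro x y h
    have : f₂ y ∈ f₂ '' F₂ := by
      rw [← him, ← hint]; exact ⟨⟨x, h⟩, ⟨y, rfl⟩⟩
    obtain ⟨y', hy', he⟩ := this
    rwa [← f₂.injective he]
  have cross : ∀ x ∈ F₁, ∃ y ∈ F₂, f₂ y = f₁ x := by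
    intro x hx
    have : f₁ x ∈ f₂ '' F₂ := by rw [← him]; exact ⟨x, hx, rfl⟩
    obtain ⟨y, hy, he⟩ := this
    exact ⟨y, hy, he⟩
  have cross' : ∀ y ∈ F₂, ∃ x ∈ F₁, f₁ x = f₂ y := by
    intro y hy
    have : f₂ y ∈ f₁ '' F₁ := by rw [him]; exact ⟨y, hy, rfl⟩
    obtain ⟨x, hx, he⟩ := this
    exact ⟨x, hx, he⟩
  have same₁ : ∀ (x y : ↥(f₁ ⁻¹' W)), (x : V₁) ∈ F₁ → (y : V₁) ∈ F₁ → mk1 x = mk1 y := by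
    intro x y hx hy
    by_cases hxy : x = y
    · rw [hxy]
    · exact ConnectedComponent.connectedComponentMk_eq_of_adj
        (hc₁ _ hx _ hy (fun h => hxy (Subtype.ext h)))
  have same₂ : ∀ (x y : ↥(f₂ ⁻¹' W)), (x : V₂) ∈ F₂ → (y : V₂) ∈ F₂ → mk2 x = mk2 y := by
    intro x y hx hy
    by_cases hxy : x = y
    · rw [hxy]
    · exact ConnectedComponent.connectedComponentMk_eq_of_adj
        (hc₂ _ hx _ hy (fun h => hxy (Subtype.ext h)))
  -- graph homomorphisms into G|W
  let φ₁ : G₁.induce (f₁ ⁻¹' W) →g G.induce W :=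
    ⟨fun x => ⟨f₁ x, x.2⟩, fun h => (hadj _ _).2 (Or.inl ⟨_, _, h, rfl, rfl⟩)⟩
  let φ₂ : G₂.induce (f₂ ⁻¹' W) →g G.induce W :=
    ⟨fun y => ⟨f₂ y, y.2⟩, fun h => (hadj _ _).2 (Or.inr ⟨_, _, h, rfl, rfl⟩)⟩
  set touch : (G₂.induce (f₂ ⁻¹' W)).ConnectedComponent → Prop :=
    fun c => ∃ y : ↥(f₂ ⁻¹' W), (y : V₂) ∈ F₂ ∧ mk2 y = c with htouch
  have touch_iff : ∀ (y : ↥(f₂ ⁻¹' W)), (y : V₂) ∈ F₂ → touch (mk2 y) :=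
    fun y hy => ⟨y, hy, rfl⟩
  -- counting pieces
  have hsplit : Nat.card {c // touch c} + Nat.card {c // ¬ touch c}
      = Nat.card (G₂.induce (f₂ ⁻¹' W)).ConnectedComponent := by
    rw [← Nat.card_sum]
    exact Nat.card_congr (Equiv.sumCompl touch)
  by_cases hS : ∃ x : ↥(f₁ ⁻¹' W), (x : V₁) ∈ F₁
  · obtain ⟨s1, hs1⟩ := hS
    set hm : ↥W → (G₁.induce (f₁ ⁻¹' W)).ConnectedComponent ⊕
        {c : (G₂.induce (f₂ ⁻¹' W)).ConnectedComponent // ¬ touch c} :=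
      fun a =>
        if h : (a : V) ∈ Set.range f₁ then
          Sum.inl (mk1 ⟨h.choose, show h.choose ∈ f₁ ⁻¹' W by
            simp only [Set.mem_preimage, h.choose_spec]; exact a.2⟩)
        else
          if ht : touch (mk2 ⟨(hmem₂ a.1 h).choose,
              show (hmem₂ a.1 h).choose ∈ f₂ ⁻¹' W by
                simp only [Set.mem_preimage, (hmem₂ a.1 h).choose_spec]; exact a.2⟩) then
            Sum.inl (mk1 s1)
          else
            Sum.inr ⟨mk2 ⟨(hmem₂ a.1 h).choose,
              show (hmem₂ a.1 h).choose ∈ f₂ ⁻¹' W by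
                simp only [Set.mem_preimage, (hmem₂ a.1 h).choose_spec]; exact a.2⟩, ht⟩
      with hm_def
    have hmf₁ : ∀ (x : V₁) (hx : f₁ x ∈ W), hm ⟨f₁ x, hx⟩ = Sum.inl (mk1 ⟨x, hx⟩) := by
      intro x hx
      rw [hm_def]
      dsimp only
      split
      · next h =>
        have h1 : h.choose = x := f₁.injective h.choose_spec
        exact congrArg (fun z => Sum.inl (mk1 z)) (Subtype.ext h1)
      · next h => exact absurd ⟨x, rfl⟩ h
    have gen₂ : ∀ (z z' : ↥(f₂ ⁻¹' W)), z = z' →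
        (if ht : touch (mk2 z) then
            (Sum.inl (mk1 s1) : _ ⊕ {c // ¬ touch c})
          else Sum.inr ⟨mk2 z, ht⟩)
        = if ht : touch (mk2 z') then Sum.inl (mk1 s1) else Sum.inr ⟨mk2 z', ht⟩ := by
      intro z z' h; rw [h]
    have hmf₂ : ∀ (y : V₂) (hy : f₂ y ∈ W), f₂ y ∉ Set.range f₁ →
        hm ⟨f₂ y, hy⟩ = if ht : touch (mk2 ⟨y, hy⟩) then Sum.inl (mk1 s1)
          else Sum.inr ⟨mk2 ⟨y, hy⟩, ht⟩ := by
      intro y hy hr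
      rw [hm_def]
      dsimp only
      split
      · next h => exact absurd h hr
      · next h =>
        exact gen₂ _ _ (Subtype.ext (f₂.injective (hmem₂ _ h).choose_spec))
    have hstep : ∀ (a b : ↥W), (G.induce W).Adj a b → hm a = hm b := by
      rintro a b hab
      rcases (hadj a b).1 hab with ⟨x, y, hxy, hxa, hyb⟩ | ⟨x, y, hxy, hxa, hyb⟩
      · have hxW : f₁ x ∈ W := by rw [hxa]; exact a.2
        have hyW : f₁ y ∈ W := by rw [hyb]; exact b.2
        have ea : a = ⟨f₁ x, hxW⟩ := Subtype.ext hxa.symm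
        have eb : b = ⟨f₁ y, hyW⟩ := Subtype.ext hyb.symm
        rw [ea, eb, hmf₁, hmf₁]
        exact congrArg Sum.inl
          (ConnectedComponent.connectedComponentMk_eq_of_adj hxy)
      · have hxW : x ∈ f₂ ⁻¹' W := by rw [Set.mem_preimage, hxa]; exact a.2
        have hyW : y ∈ f₂ ⁻¹' W := by rw [Set.mem_preimage, hyb]; exact b.2
        have ea : a = ⟨f₂ x, hxW⟩ := Subtype.ext hxa.symm
        have eb : b = ⟨f₂ y, hyW⟩ := Subtype.ext hyb.symm
        have hmk : mk2 ⟨x, hxW⟩ = mk2 ⟨y, hyW⟩ :=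
          ConnectedComponent.connectedComponentMk_eq_of_adj hxy
        rw [ea, eb]
        by_cases hra : f₂ x ∈ Set.range f₁
        · obtain ⟨x', hx'⟩ := hra
          have hx'W : f₁ x' ∈ W := by rw [hx']; exact hxW
          have e1 : (⟨f₂ x, hxW⟩ : ↥W) = ⟨f₁ x', hx'W⟩ := Subtype.ext hx'.symm
          rw [e1, hmf₁]
          have hx'F : x' ∈ F₁ := hboth₁ x' x hx'
          by_cases hrb : f₂ y ∈ Set.range f₁
          · obtain ⟨y', hy'⟩ := hrb
            have hy'W : f₁ y' ∈ W := by rw [hy']; exact hyW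
            have e2 : (⟨f₂ y, hyW⟩ : ↥W) = ⟨f₁ y', hy'W⟩ := Subtype.ext hy'.symm
            rw [e2, hmf₁]
            exact congrArg Sum.inl (same₁ _ _ hx'F (hboth₁ y' y hy'))
          · rw [hmf₂ y hyW hrb]
            have ht : touch (mk2 ⟨y, hyW⟩) :=
              hmk ▸ touch_iff ⟨x, hxW⟩ (hboth₂ x' x hx')
            rw [dif_pos ht]
            exact congrArg Sum.inl (same₁ _ _ hx'F hs1)
        · rw [hmf₂ x hxW hra]
          by_cases hrb : f₂ y ∈ Set.range f₁
          · obtain ⟨y', hy'⟩ := hrb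
            have hy'W : f₁ y' ∈ W := by rw [hy']; exact hyW
            have e2 : (⟨f₂ y, hyW⟩ : ↥W) = ⟨f₁ y', hy'W⟩ := Subtype.ext hy'.symm
            rw [e2, hmf₁]
            have ht : touch (mk2 ⟨x, hxW⟩) :=
              hmk.symm ▸ touch_iff ⟨y, hyW⟩ (hboth₂ y' y hy')
            rw [dif_pos ht]
            exact congrArg Sum.inl (same₁ _ _ hs1 (hboth₁ y' y hy'))
          · rw [hmf₂ y hyW hrb, hmk]
    have walkinv : ∀ (v w : ↥W) (p : (G.induce W).Walk v w), hm v = hm w := by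
      intro v w p
      induction p with
      | nil => rfl
      | cons h q ih => exact (hstep _ _ h).trans ih
    let Hbar : (G.induce W).ConnectedComponent →
        (G₁.induce (f₁ ⁻¹' W)).ConnectedComponent ⊕ {c // ¬ touch c} :=
      ConnectedComponent.lift hm (fun v w p _ => walkinv v w p)
    let alpha : ((G₁.induce (f₁ ⁻¹' W)).ConnectedComponent ⊕ {c // ¬ touch c}) →
        (G.induce W).ConnectedComponent :=
      Sum.elim (ConnectedComponent.map φ₁) (fun p => ConnectedComponent.map φ₂ p.1)
    have hleft : ∀ z, Hbar (alpha z) = z := by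
      rintro (c | ⟨d, hd⟩)
      · refine ConnectedComponent.ind (fun x => ?_) c
        show hm ⟨f₁ x.1, x.2⟩ = Sum.inl (mk1 x)
        rw [hmf₁ x.1 x.2]
      · revert hd
        refine ConnectedComponent.ind (fun y => ?_) d
        intro hd
        have hry : f₂ y.1 ∉ Set.range f₁ := by
          rintro ⟨x', hx'⟩
          exact hd (touch_iff y (hboth₂ x' y.1 hx'))
        show hm ⟨f₂ y.1, y.2⟩ = Sum.inr ⟨mk2 y, hd⟩
        rw [hmf₂ y.1 y.2 hry]
        rw [dif_neg (by rw [Subtype.coe_eta]; exact hd)]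
    have hright : ∀ c, alpha (Hbar c) = c := by
      refine ConnectedComponent.ind (fun a => ?_)
      by_cases ha : (a : V) ∈ Set.range f₁
      · obtain ⟨x, hx⟩ := ha
        have hxW : f₁ x ∈ W := by rw [hx]; exact a.2
        have e : a = ⟨f₁ x, hxW⟩ := Subtype.ext hx.symm
        rw [e]
        show alpha (hm ⟨f₁ x, hxW⟩) = mkG ⟨f₁ x, hxW⟩
        rw [hmf₁ x hxW]
        rfl
      · obtain ⟨y, hy⟩ := hmem₂ (a : V) ha
        have hyW : f₂ y ∈ W := by rw [hy]; exact a.2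
        have e : a = ⟨f₂ y, hyW⟩ := Subtype.ext hy.symm
        have hry : f₂ y ∉ Set.range f₁ := by rw [hy]; exact ha
        rw [e]
        show alpha (hm ⟨f₂ y, hyW⟩) = mkG ⟨f₂ y, hyW⟩
        rw [hmf₂ y hyW hry]
        by_cases ht : touch (mk2 ⟨y, hyW⟩)
        · rw [dif_pos ht]
          obtain ⟨y', hy'F, hy'mk⟩ := ht
          obtain ⟨x'', hx''F, hx''e⟩ := cross' y'.1 hy'F
          have hx''W : x'' ∈ f₁ ⁻¹' W := by rw [Set.mem_preimage, hx''e]; exact y'.2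
          show ConnectedComponent.map φ₁ (mk1 s1) = mkG ⟨f₂ y, hyW⟩
          have p0 : mk1 s1 = mk1 ⟨x'', hx''W⟩ := same₁ _ _ hs1 hx''F
          rw [p0, ConnectedComponent.map_mk]
          have p1 : (φ₁ ⟨x'', hx''W⟩ : ↥W) = φ₂ y' := Subtype.ext hx''e
          rw [p1]
          have p2 := congrArg (ConnectedComponent.map φ₂) hy'mk
          rw [ConnectedComponent.map_mk, ConnectedComponent.map_mk] at p2
          exact p2
        · rw [dif_neg ht]
          rfl
    let e : ((G₁.induce (f₁ ⁻¹' W)).ConnectedComponent ⊕ {c // ¬ touch c})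
        ≃ (G.induce W).ConnectedComponent := ⟨alpha, Hbar, hleft, hright⟩
    have hcardC : Nat.card (G.induce W).ConnectedComponent
        = Nat.card (G₁.induce (f₁ ⁻¹' W)).ConnectedComponent
          + Nat.card {c // ¬ touch c} := by
      rw [← Nat.card_sum]
      exact (Nat.card_congr e).symm
    have hone : Nat.card {c // touch c} = 1 := by
      rw [Nat.card_eq_one_iff_unique]
      constructor
      · constructor
        rintro ⟨c, yc, hycF, hyc⟩ ⟨c', yc', hycF', hyc'⟩
        apply Subtype.ext
        show c = c'
        rw [← hyc, ← hyc']
        exact same₂ _ _ hycF hycF'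
      · obtain ⟨y0, hy0F, hy0e⟩ := cross s1.1 hs1
        have hy0W : y0 ∈ f₂ ⁻¹' W := by rw [Set.mem_preimage, hy0e]; exact s1.2
        exact ⟨⟨mk2 ⟨y0, hy0W⟩, touch_iff _ hy0F⟩⟩
    have hne : (W ∩ f₁ '' F₁).Nonempty := ⟨f₁ s1.1, s1.2, ⟨s1.1, hs1, rfl⟩⟩
    rw [if_pos hne]
    omega
  · have hnotouch : ∀ c, ¬ touch c := by
      rintro c ⟨y, hyF, -⟩
      obtain ⟨x, hxF, hxe⟩ := cross' y.1 hyF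
      have hxW : x ∈ f₁ ⁻¹' W := by rw [Set.mem_preimage, hxe]; exact y.2
      exact hS ⟨⟨x, hxW⟩, hxF⟩
    have hne : ¬ (W ∩ f₁ '' F₁).Nonempty := by
      rintro ⟨a, haW, x, hxF, hxe⟩
      exact hS ⟨⟨x, by rw [Set.mem_preimage, hxe]; exact haW⟩, hxF⟩
    rw [if_neg hne]
    set hm : ↥W → (G₁.induce (f₁ ⁻¹' W)).ConnectedComponent ⊕
        (G₂.induce (f₂ ⁻¹' W)).ConnectedComponent :=
      fun a =>
        if h : (a : V) ∈ Set.range f₁ then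
          Sum.inl (mk1 ⟨h.choose, show h.choose ∈ f₁ ⁻¹' W by
            simp only [Set.mem_preimage, h.choose_spec]; exact a.2⟩)
        else
          Sum.inr (mk2 ⟨(hmem₂ a.1 h).choose, show (hmem₂ a.1 h).choose ∈ f₂ ⁻¹' W by
            simp only [Set.mem_preimage, (hmem₂ a.1 h).choose_spec]; exact a.2⟩)
      with hm_def
    have hmf₁ : ∀ (x : V₁) (hx : f₁ x ∈ W), hm ⟨f₁ x, hx⟩ = Sum.inl (mk1 ⟨x, hx⟩) := by
      intro x hx
      rw [hm_def]
      dsimp only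
      split
      · next h =>
        have h1 : h.choose = x := f₁.injective h.choose_spec
        exact congrArg (fun z => Sum.inl (mk1 z)) (Subtype.ext h1)
      · next h => exact absurd ⟨x, rfl⟩ h
    have hmf₂ : ∀ (y : V₂) (hy : f₂ y ∈ W), f₂ y ∉ Set.range f₁ →
        hm ⟨f₂ y, hy⟩ = Sum.inr (mk2 ⟨y, hy⟩) := by
      intro y hy hr
      rw [hm_def]
      dsimp only
      split
      · next h => exact absurd h hr
      · next h =>
        exact congrArg (fun z => Sum.inr (mk2 z))
          (Subtype.ext (f₂.injective (hmem₂ _ h).choose_spec))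
    have hnr : ∀ (y : V₂), y ∈ f₂ ⁻¹' W → f₂ y ∉ Set.range f₁ := by
      rintro y hyW ⟨x', hx'⟩
      exact hnotouch (mk2 ⟨y, hyW⟩) (touch_iff ⟨y, hyW⟩ (hboth₂ x' y hx'))
    have hstep : ∀ (a b : ↥W), (G.induce W).Adj a b → hm a = hm b := by
      rintro a b hab
      rcases (hadj a b).1 hab with ⟨x, y, hxy, hxa, hyb⟩ | ⟨x, y, hxy, hxa, hyb⟩
      · have hxW : f₁ x ∈ W := by rw [hxa]; exact a.2
        have hyW : f₁ y ∈ W := by rw [hyb]; exact b.2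
        have ea : a = ⟨f₁ x, hxW⟩ := Subtype.ext hxa.symm
        have eb : b = ⟨f₁ y, hyW⟩ := Subtype.ext hyb.symm
        rw [ea, eb, hmf₁, hmf₁]
        exact congrArg Sum.inl
          (ConnectedComponent.connectedComponentMk_eq_of_adj hxy)
      · have hxW : x ∈ f₂ ⁻¹' W := by rw [Set.mem_preimage, hxa]; exact a.2
        have hyW : y ∈ f₂ ⁻¹' W := by rw [Set.mem_preimage, hyb]; exact b.2
        have ea : a = ⟨f₂ x, hxW⟩ := Subtype.ext hxa.symm
        have eb : b = ⟨f₂ y, hyW⟩ := Subtype.ext hyb.symm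
        rw [ea, eb, hmf₂ x hxW (hnr x hxW), hmf₂ y hyW (hnr y hyW)]
        exact congrArg Sum.inr
          (ConnectedComponent.connectedComponentMk_eq_of_adj hxy)
    have walkinv : ∀ (v w : ↥W) (p : (G.induce W).Walk v w), hm v = hm w := by
      intro v w p
      induction p with
      | nil => rfl
      | cons h q ih => exact (hstep _ _ h).trans ih
    let Hbar : (G.induce W).ConnectedComponent →
        (G₁.induce (f₁ ⁻¹' W)).ConnectedComponent ⊕
          (G₂.induce (f₂ ⁻¹' W)).ConnectedComponent :=
      ConnectedComponent.lift hm (fun v w p _ => walkinv v w p)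
    let alpha : ((G₁.induce (f₁ ⁻¹' W)).ConnectedComponent ⊕
        (G₂.induce (f₂ ⁻¹' W)).ConnectedComponent) → (G.induce W).ConnectedComponent :=
      Sum.elim (ConnectedComponent.map φ₁) (ConnectedComponent.map φ₂)
    have hleft : ∀ z, Hbar (alpha z) = z := by
      rintro (c | d)
      · refine ConnectedComponent.ind (fun x => ?_) c
        show hm ⟨f₁ x.1, x.2⟩ = Sum.inl (mk1 x)
        rw [hmf₁ x.1 x.2]
      · refine ConnectedComponent.ind (fun y => ?_) d
        show hm ⟨f₂ y.1, y.2⟩ = Sum.inr (mk2 y)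
        rw [hmf₂ y.1 y.2 (hnr y.1 y.2)]
    have hright : ∀ c, alpha (Hbar c) = c := by
      refine ConnectedComponent.ind (fun a => ?_)
      by_cases ha : (a : V) ∈ Set.range f₁
      · obtain ⟨x, hx⟩ := ha
        have hxW : f₁ x ∈ W := by rw [hx]; exact a.2
        have e : a = ⟨f₁ x, hxW⟩ := Subtype.ext hx.symm
        rw [e]
        show alpha (hm ⟨f₁ x, hxW⟩) = mkG ⟨f₁ x, hxW⟩
        rw [hmf₁ x hxW]
        rfl
      · obtain ⟨y, hy⟩ := hmem₂ (a : V) ha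
        have hyW : f₂ y ∈ W := by rw [hy]; exact a.2
        have e : a = ⟨f₂ y, hyW⟩ := Subtype.ext hy.symm
        rw [e]
        show alpha (hm ⟨f₂ y, hyW⟩) = mkG ⟨f₂ y, hyW⟩
        rw [hmf₂ y hyW (hnr y hyW)]
        rfl
    let e : ((G₁.induce (f₁ ⁻¹' W)).ConnectedComponent ⊕
        (G₂.induce (f₂ ⁻¹' W)).ConnectedComponent)
        ≃ (G.induce W).ConnectedComponent := ⟨alpha, Hbar, hleft, hright⟩
    have hcardC : Nat.card (G.induce W).ConnectedComponent
        = Nat.card (G₁.induce (f₁ ⁻¹' W)).ConnectedComponent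
          + Nat.card (G₂.induce (f₂ ⁻¹' W)).ConnectedComponent := by
      rw [← Nat.card_sum]
      exact (Nat.card_congr e).symm
    omega


lemma fiberCard {V₁ V : Type} [Fintype V] [DecidableEq V] [Fintype V₁] [DecidableEq V₁]
    (f : V₁ ↪ V) (k m : ℕ) (hm : m ≤ k) (U : Finset V₁) (hU : U.card = m) :
    ((powersetCard k (univ : Finset V)).filter
      (fun W => univ.filter (fun x => f x ∈ W) = U)).card
    = (Fintype.card V - Fintype.card V₁).choose (k - m) := by
  classical
  set R : Finset V := univ.image f with hR
  have hRcard : R.card = Fintype.card V₁ := by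
    rw [hR, Finset.card_image_of_injective _ f.injective, card_univ]
  have hinterim : ∀ W : Finset V, univ.filter (fun x => f x ∈ W) = U →
      W ∩ R = U.image f := by
    intro W hW
    ext a
    simp only [mem_inter, hR, mem_image, mem_univ, true_and]
    constructor
    · rintro ⟨haW, x, -, rfl⟩
      exact ⟨x, by rw [← hW]; simp [haW], rfl⟩
    · rintro ⟨x, hx, rfl⟩
      rw [← hW] at hx
      simp only [mem_filter, mem_univ, true_and] at hx
      exact ⟨hx, x, rfl⟩
  have hcompl : Rᶜ.card = Fintype.card V - Fintype.card V₁ := by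
    rw [card_compl, hRcard]
  rw [← hcompl, ← Finset.card_powersetCard]
  apply Finset.card_bij' (fun W _ => W \ R) (fun B _ => U.image f ∪ B)
  · -- maps into powersetCard (k-m) Rᶜ
    intro W hW
    simp only [mem_filter, Finset.mem_powersetCard] at hW
    obtain ⟨⟨-, hWk⟩, hWU⟩ := hW
    rw [Finset.mem_powersetCard]
    constructor
    · intro a ha
      simp only [mem_sdiff] at ha
      simp [ha.2]
    · have h1 : (W ∩ R).card + (W \ R).card = W.card := Finset.card_inter_add_card_sdiff W R
      rw [hinterim W hWU, Finset.card_image_of_injective _ f.injective, hU, hWk] at h1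
      omega
  · -- maps back into the fiber
    intro B hB
    rw [Finset.mem_powersetCard] at hB
    obtain ⟨hBsub, hBcard⟩ := hB
    have hdisj : Disjoint (U.image f) B := by
      refine Finset.disjoint_left.mpr ?_
      intro a ha hb
      have := hBsub hb
      simp only [Finset.mem_compl] at this
      apply this
      obtain ⟨x, -, rfl⟩ := Finset.mem_image.mp ha
      simp [hR]
    simp only [mem_filter, Finset.mem_powersetCard]
    refine ⟨⟨subset_univ _, ?_⟩, ?_⟩
    · rw [Finset.card_union_of_disjoint hdisj,
        Finset.card_image_of_injective _ f.injective, hU, hBcard]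
      omega
    · ext x
      simp only [mem_filter, mem_univ, true_and, Finset.mem_union, Finset.mem_image]
      constructor
      · rintro (⟨x', hx', he⟩ | hb)
        · rwa [← f.injective he]
        · exact absurd (by simp [hR] : f x ∈ R) (by simpa using hBsub hb)
      · intro hx
        exact Or.inl ⟨x, hx, rfl⟩
  · -- left inverse
    intro W hW
    simp only [mem_filter] at hW
    rw [← hinterim W hW.2]
    ext a
    simp only [Finset.mem_union, mem_inter, mem_sdiff]
    tauto
  · -- right inverse
    intro B hB
    rw [Finset.mem_powersetCard] at hB
    have h1 : (U.image f ∪ B) \ R = B \ R := by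
      rw [Finset.union_sdiff_distrib]
      have : U.image f \ R = ∅ := by
        rw [Finset.sdiff_eq_empty_iff_subset]
        intro a ha
        obtain ⟨x, -, rfl⟩ := Finset.mem_image.mp ha
        simp [hR]
      rw [this, Finset.empty_union]
    have hdisjBR : Disjoint B R := by
      refine Finset.disjoint_left.mpr fun a hb hr => ?_
      have := hB.1 hb
      simp only [Finset.mem_compl] at this
      exact this hr
    rw [h1]
    ext a
    simp only [mem_sdiff]
    exact ⟨fun h => h.1, fun h => ⟨h, Finset.disjoint_left.mp hdisjBR h⟩⟩

lemma sum_embed {V₁ V : Type} [Fintype V] [DecidableEq V] [Fintype V₁] [DecidableEq V₁]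
    (f : V₁ ↪ V) (g : Finset V₁ → ℕ) (k : ℕ) :
    ∑ W ∈ powersetCard k (univ : Finset V), g (univ.filter (fun x => f x ∈ W))
    = ∑ m ∈ Finset.range (k + 1),
        (Fintype.card V - Fintype.card V₁).choose (k - m)
          * ∑ U ∈ powersetCard m (univ : Finset V₁), g U := by
  classical
  set pre : Finset V → Finset V₁ := fun W => univ.filter (fun x => f x ∈ W) with hpre
  set t : Finset (Finset V₁) :=
    (Finset.range (k + 1)).biUnion (fun m => powersetCard m (univ : Finset V₁)) with ht
  have hmaps : ∀ W ∈ powersetCard k (univ : Finset V), pre W ∈ t := by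
    intro W hW
    rw [Finset.mem_powersetCard] at hW
    have hcard : (pre W).card ≤ k := by
      have h1 : ((pre W).image f).card = (pre W).card :=
        Finset.card_image_of_injective _ f.injective
      have h2 : (pre W).image f ⊆ W := by
        intro a ha
        obtain ⟨x, hx, rfl⟩ := Finset.mem_image.mp ha
        simpa [hpre] using hx
      have := Finset.card_le_card h2
      omega
    rw [ht, Finset.mem_biUnion]
    exact ⟨(pre W).card, by simp [Finset.mem_range]; omega,
      by rw [Finset.mem_powersetCard]; exact ⟨subset_univ _, rfl⟩⟩
  rw [← Finset.sum_fiberwise_of_maps_to hmaps (fun W => g (pre W))]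
  rw [ht, Finset.sum_biUnion]
  · apply Finset.sum_congr rfl
    intro m hm
    rw [Finset.mem_range] at hm
    rw [Finset.mul_sum]
    apply Finset.sum_congr rfl
    intro U hU
    rw [Finset.mem_powersetCard] at hU
    have h3 : ∀ W ∈ (powersetCard k (univ : Finset V)).filter (fun W => pre W = U),
        g (pre W) = g U := by
      intro W hW
      rw [mem_filter] at hW
      rw [hW.2]
    rw [Finset.sum_congr rfl h3, Finset.sum_const, smul_eq_mul,
      fiberCard f k m (by omega) U hU.2]
  · intro a ha b hb hab
    simp only [Finset.coe_range, Set.mem_Iio] at ha hb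
    apply Finset.disjoint_left.mpr
    intro U hUa hUb
    rw [Finset.mem_powersetCard] at hUa hUb
    exact hab (by rw [← hUa.2, hUb.2])

lemma countDisjoint {V : Type} [Fintype V] [DecidableEq V] (K : Finset V) (k : ℕ) :
    ((powersetCard k (univ : Finset V)).filter (fun W => W ∩ K = ∅)).card
    = (Fintype.card V - K.card).choose k := by
  classical
  have : (powersetCard k (univ : Finset V)).filter (fun W => W ∩ K = ∅)
      = powersetCard k Kᶜ := by
    ext W
    simp only [mem_filter, Finset.mem_powersetCard]
    constructor
    · rintro ⟨⟨-, hk⟩, hint⟩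
      refine ⟨?_, hk⟩
      intro a ha
      rw [Finset.mem_compl]
      intro haK
      have : a ∈ W ∩ K := Finset.mem_inter.mpr ⟨ha, haK⟩
      rw [hint] at this
      exact absurd this (Finset.notMem_empty a)
    · rintro ⟨hsub, hk⟩
      refine ⟨⟨subset_univ _, hk⟩, ?_⟩
      ext a
      simp only [Finset.mem_inter, Finset.notMem_empty, iff_false, not_and]
      intro ha
      have := hsub ha
      rwa [Finset.mem_compl] at this
  rw [this, Finset.card_powersetCard, Finset.card_compl]

lemma connSum_count {V₁ V₂ V : Type} [Fintype V₁] [DecidableEq V₁] [Fintype V₂]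
    [DecidableEq V₂] [Fintype V] [DecidableEq V]
    {t : ℕ} {G₁ : SimpleGraph V₁} {G₂ : SimpleGraph V₂} {G : SimpleGraph V}
    (h : IsConnSum t G₁ G₂ G) :
    Fintype.card V + t = Fintype.card V₁ + Fintype.card V₂ ∧
    t ≤ Fintype.card V₁ ∧ t ≤ Fintype.card V₂ ∧
    ∀ k, graphC k G + (Fintype.card V).choose k
      = (∑ m ∈ Finset.range (k+1), (Fintype.card V₂ - t).choose (k-m) * graphC m G₁)
      + (∑ m ∈ Finset.range (k+1), (Fintype.card V₁ - t).choose (k-m) * graphC m G₂)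
      + (Fintype.card V - t).choose k := by
  classical
  obtain ⟨f₁, f₂, F₁, F₂, ht₁, ht₂, hc₁, hc₂, hcov, hint, him, hadj⟩ := h
  have hr₁ : (Set.range ⇑f₁).ncard = Fintype.card V₁ := by
    rw [← Set.image_univ, Set.ncard_image_of_injective _ f₁.injective, Set.ncard_univ,
      Nat.card_eq_fintype_card]
  have hr₂ : (Set.range ⇑f₂).ncard = Fintype.card V₂ := by
    rw [← Set.image_univ, Set.ncard_image_of_injective _ f₂.injective, Set.ncard_univ,
      Nat.card_eq_fintype_card]
  have hF₁ : F₁.ncard = t := by rw [← Nat.card_coe_set_eq, ht₁]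
  have hF₂ : F₂.ncard = t := by rw [← Nat.card_coe_set_eq, ht₂]
  have hK : (⇑f₁ '' F₁).ncard = t := by
    rw [Set.ncard_image_of_injective _ f₁.injective, hF₁]
  have hn : Fintype.card V + t = Fintype.card V₁ + Fintype.card V₂ := by
    have h0 := Set.ncard_union_add_ncard_inter (Set.range ⇑f₁) (Set.range ⇑f₂)
    rw [hcov, hint, Set.ncard_univ, Nat.card_eq_fintype_card, hK, hr₁, hr₂] at h0
    exact h0
  have hle₁ : t ≤ Fintype.card V₁ := by
    have := Set.ncard_le_ncard (Set.subset_univ F₁) Set.finite_univ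
    rwa [hF₁, Set.ncard_univ, Nat.card_eq_fintype_card] at this
  have hle₂ : t ≤ Fintype.card V₂ := by
    have := Set.ncard_le_ncard (Set.subset_univ F₂) Set.finite_univ
    rwa [hF₂, Set.ncard_univ, Nat.card_eq_fintype_card] at this
  refine ⟨hn, hle₁, hle₂, fun k => ?_⟩
  haveI : Finite V := Finite.of_fintype V
  -- per-subset component count
  have key : ∀ W : Finset V,
      Nat.card (G.induce (↑W : Set V)).ConnectedComponent
        + (if ((↑W : Set V) ∩ ⇑f₁ '' F₁).Nonempty then 1 else 0)
      = Nat.card (G₁.induce (↑(univ.filter (fun x => f₁ x ∈ W)) : Set V₁)).ConnectedComponent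
        + Nat.card (G₂.induce (↑(univ.filter (fun x => f₂ x ∈ W)) : Set V₂)).ConnectedComponent := by
    intro W
    have e1 : (↑(univ.filter (fun x => f₁ x ∈ W)) : Set V₁) = f₁ ⁻¹' ↑W := by
      ext x; simp
    have e2 : (↑(univ.filter (fun x => f₂ x ∈ W)) : Set V₂) = f₂ ⁻¹' ↑W := by
      ext x; simp
    rw [e1, e2]
    exact keyCount G₁ G₂ G f₁ f₂ F₁ F₂ hc₁ hc₂ hcov hint him hadj ↑W
  have S0 : ∑ W ∈ powersetCard k (univ : Finset V),
      (Nat.card (G.induce (↑W : Set V)).ConnectedComponent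
        + (if ((↑W : Set V) ∩ ⇑f₁ '' F₁).Nonempty then 1 else 0))
      = ∑ W ∈ powersetCard k (univ : Finset V),
        (Nat.card (G₁.induce (↑(univ.filter (fun x => f₁ x ∈ W)) : Set V₁)).ConnectedComponent
        + Nat.card (G₂.induce (↑(univ.filter (fun x => f₂ x ∈ W)) : Set V₂)).ConnectedComponent) :=
    Finset.sum_congr rfl (fun W _ => key W)
  rw [Finset.sum_add_distrib, Finset.sum_add_distrib] at S0
  rw [sum_embed f₁ (fun U => Nat.card (G₁.induce (↑U : Set V₁)).ConnectedComponent) k,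
    sum_embed f₂ (fun U => Nat.card (G₂.induce (↑U : Set V₂)).ConnectedComponent) k] at S0
  -- the indicator sum
  set K : Finset V := (Set.toFinite (⇑f₁ '' F₁)).toFinset with hKdef
  have hKcard : K.card = t := by
    rw [hKdef, ← Set.ncard_eq_toFinset_card _ (Set.toFinite _), hK]
  have hiff : ∀ W : Finset V,
      ((↑W : Set V) ∩ ⇑f₁ '' F₁).Nonempty ↔ ¬ (W ∩ K = ∅) := by
    intro W
    constructor
    · rintro ⟨a, haW, haK⟩ hemp
      have hmem : a ∈ W ∩ K := Finset.mem_inter.mpr ⟨haW, by rw [hKdef, Set.Finite.mem_toFinset]; exact haK⟩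
      rw [hemp] at hmem
      exact absurd hmem (Finset.notMem_empty a)
    · intro hne
      obtain ⟨a, ha⟩ := Finset.nonempty_iff_ne_empty.mpr hne
      rw [Finset.mem_inter] at ha
      exact ⟨a, ha.1, by simpa [hKdef] using ha.2⟩
  have hind : ∑ W ∈ powersetCard k (univ : Finset V),
      (if ((↑W : Set V) ∩ ⇑f₁ '' F₁).Nonempty then 1 else 0)
      = ((powersetCard k (univ : Finset V)).filter (fun W => ¬ (W ∩ K = ∅))).card := by
    rw [Finset.card_filter]
    apply Finset.sum_congr rfl
    intro W _
    exact if_congr (hiff W) rfl rfl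
  have hsplit := Finset.card_filter_add_card_filter_not
    (s := powersetCard k (univ : Finset V)) (p := fun W => W ∩ K = ∅)
  rw [countDisjoint K k, hKcard, Finset.card_powersetCard, card_univ] at hsplit
  have e3 : Fintype.card V - Fintype.card V₁ = Fintype.card V₂ - t := by omega
  have e4 : Fintype.card V - Fintype.card V₂ = Fintype.card V₁ - t := by omega
  rw [e3, e4, hind] at S0
  simp only [graphC]
  omega

open scoped Classical in
noncomputable def cInv (k : ℕ) (p : (W : Type) × SimpleGraph W) : ℕ :=
  if h : Finite p.1 then
    @graphC p.1 (@Fintype.ofFinite p.1 h) (Classical.decEq p.1) k p.2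
  else 0

lemma cInv_eq {p : (W : Type) × SimpleGraph W} (i : Fintype p.1) (d : DecidableEq p.1) (k : ℕ) :
    cInv k p = @graphC p.1 i d k p.2 := by
  have hf : Finite p.1 := @Finite.of_fintype _ i
  rw [cInv, dif_pos hf]
  have e1 : @Fintype.ofFinite p.1 hf = i := Subsingleton.elim _ _
  have e2 : (Classical.decEq p.1) = d := Subsingleton.elim _ _
  rw [e1, e2]

lemma iter_ne_nil {t : ℕ} {l : List ((W : Type) × SimpleGraph W)}
    {p : (W : Type) × SimpleGraph W} (h : IsIterConnSum t l p) : l ≠ [] := by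
  cases h with
  | single p => simp
  | cons h1 h2 => simp

lemma iter_inv {t : ℕ} {l' : List ((W : Type) × SimpleGraph W)}
    {r : (W : Type) × SimpleGraph W} (h : IsIterConnSum t l' r) :
    ∀ l q, l' = l ++ [q] → l ≠ [] →
      ∃ p, IsIterConnSum t l p ∧ IsConnSum t p.2 q.2 r.2 := by
  cases h with
  | single p =>
    intro l q he hl
    exfalso
    have := congrArg List.length he
    simp at this
    exact hl this.symm.symm
  | cons h1 h2 =>
    intro l q he hl
    obtain ⟨he1, he2⟩ := List.append_inj' he rfl
    obtain rfl := he1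
    have : _ = q := List.head_eq_of_cons_eq he2
    subst this
    exact ⟨_, h1, h2⟩

lemma iter_eqs {t : ℕ} {l' : List ((W : Type) × SimpleGraph W)}
    {r : (W : Type) × SimpleGraph W} (h : IsIterConnSum t l' r) :
    ∀ q, l' = [q] → r = q := by
  cases h with
  | single p =>
    intro q he
    exact (List.head_eq_of_cons_eq he)
  | cons h1 h2 =>
    intro q he
    exfalso
    have hlen := congrArg List.length he
    simp at hlen
    exact iter_ne_nil h1 hlen

lemma connSum_finite {V₁ V₂ V : Type} {t : ℕ} {G₁ : SimpleGraph V₁} {G₂ : SimpleGraph V₂}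
    {G : SimpleGraph V} (h : IsConnSum t G₁ G₂ G) (hf : Finite V) :
    Finite V₁ ∧ Finite V₂ := by
  obtain ⟨f₁, f₂, -⟩ := h
  exact ⟨Finite.of_injective f₁ f₁.injective, Finite.of_injective f₂ f₂.injective⟩

lemma iter_inv_main {t : ℕ} {l : List ((W : Type) × SimpleGraph W)}
    {pG : (W : Type) × SimpleGraph W} (hG : IsIterConnSum t l pG) :
    ∀ pH, IsIterConnSum t l pH → Finite pG.1 → Finite pH.1 →
      Nat.card pG.1 = Nat.card pH.1 ∧ ∀ k, cInv k pG = cInv k pH := by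
  induction hG with
  | single p =>
    intro pH hH _ _
    rw [iter_eqs hH p rfl]
    exact ⟨rfl, fun _ => rfl⟩
  | @cons l₀ p q r h1 h2 ih =>
    intro pH hH hfG hfH
    obtain ⟨p', h1', h2'⟩ := iter_inv hH l₀ q rfl (iter_ne_nil h1)
    obtain ⟨hfp, hfq⟩ := connSum_finite h2 hfG
    obtain ⟨hfp', -⟩ := connSum_finite h2' hfH
    obtain ⟨hcard, hcinv⟩ := ih p' h1' hfp hfp'
    haveI := hfG; haveI := hfH; haveI := hfp; haveI := hfq; haveI := hfp'
    letI ir : Fintype r.1 := Fintype.ofFinite _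
    letI dr : DecidableEq r.1 := Classical.decEq _
    letI ip : Fintype p.1 := Fintype.ofFinite _
    letI dp : DecidableEq p.1 := Classical.decEq _
    letI iq : Fintype q.1 := Fintype.ofFinite _
    letI dq : DecidableEq q.1 := Classical.decEq _
    letI ip' : Fintype p'.1 := Fintype.ofFinite _
    letI dp' : DecidableEq p'.1 := Classical.decEq _
    letI iH : Fintype pH.1 := Fintype.ofFinite _
    letI dH : DecidableEq pH.1 := Classical.decEq _
    obtain ⟨hn1, hle1p, hle1q, hf1⟩ := connSum_count h2
    obtain ⟨hn2, hle2p, hle2q, hf2⟩ := connSum_count h2'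
    have hpcard : Fintype.card p.1 = Fintype.card p'.1 := by
      rw [← Nat.card_eq_fintype_card, ← Nat.card_eq_fintype_card]
      exact hcard
    have hrcard : Fintype.card r.1 = Fintype.card pH.1 := by omega
    constructor
    · rw [Nat.card_eq_fintype_card, Nat.card_eq_fintype_card]
      exact hrcard
    · intro k
      rw [cInv_eq ir dr, cInv_eq iH dH]
      have hck : ∀ m, @graphC p.1 ip dp m p.2 = @graphC p'.1 ip' dp' m p'.2 := by
        intro m
        rw [← cInv_eq ip dp, ← cInv_eq ip' dp']
        exact hcinv m
      have hf1k := hf1 k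
      have hf2k := hf2 k
      have hsum1 : ∑ m ∈ Finset.range (k+1),
            (Fintype.card q.1 - t).choose (k-m) * @graphC p.1 ip dp m p.2
          = ∑ m ∈ Finset.range (k+1),
            (Fintype.card q.1 - t).choose (k-m) * @graphC p'.1 ip' dp' m p'.2 := by
        apply Finset.sum_congr rfl
        intro m _
        rw [hck m]
      have hsum2 : ∑ m ∈ Finset.range (k+1),
            (Fintype.card p.1 - t).choose (k-m) * @graphC q.1 iq dq m q.2
          = ∑ m ∈ Finset.range (k+1),
            (Fintype.card p'.1 - t).choose (k-m) * @graphC q.1 iq dq m q.2 := by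
        apply Finset.sum_congr rfl
        intro m _
        rw [hpcard]
      rw [hsum1, hsum2, hrcard] at hf1k
      omega

lemma graphB_eq_graphC {V : Type} [Fintype V] [DecidableEq V] (k : ℕ) (G : SimpleGraph V) :
    graphB k G = (graphC k G : ℤ) - ((Fintype.card V).choose k : ℤ) := by
  simp only [graphB, graphC, Finset.sum_sub_distrib, Finset.sum_const, nsmul_eq_mul, mul_one,
    Finset.card_powersetCard, Finset.card_univ, Nat.cast_sum]


/-- `b_k` of a `t`-connected sum of `G₁, …, G_n` does not depend on the
choices made in the construction. -/
theorem bk_iterConnSum_independent (t : ℕ) (l : List ((W : Type) × SimpleGraph W))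
    {V₁ V₂ : Type} [Fintype V₁] [DecidableEq V₁] [Fintype V₂] [DecidableEq V₂]
    (G : SimpleGraph V₁) (H : SimpleGraph V₂)
    (hG : IsIterConnSum t l ⟨V₁, G⟩) (hH : IsIterConnSum t l ⟨V₂, H⟩) :
    ∀ k, graphB k G = graphB k H := by
  intro k
  haveI : Finite V₁ := Finite.of_fintype V₁
  haveI : Finite V₂ := Finite.of_fintype V₂
  obtain ⟨hcard, hcinv⟩ := iter_inv_main hG ⟨V₂, H⟩ hH ‹Finite V₁› ‹Finite V₂›
  have h1 : Fintype.card V₁ = Fintype.card V₂ := by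
    rw [← Nat.card_eq_fintype_card, ← Nat.card_eq_fintype_card]
    exact hcard
  have e1 := cInv_eq (p := ⟨V₁, G⟩) ‹Fintype V₁› ‹DecidableEq V₁› k
  have e2 := cInv_eq (p := ⟨V₂, H⟩) ‹Fintype V₂› ‹DecidableEq V₂› k
  have h2 : graphC k G = graphC k H := by
    rw [← e1, ← e2]
    exact hcinv k
  rw [graphB_eq_graphC, graphB_eq_graphC, h1, h2]
end

section
/- Let G be a t-connected sum of n copies of the complete graph K_{t+1}, for a positive integer t. Then G has t + n vertices and b_k(G) = (k−1)·C(n,k) for k ≥ 1. -/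
open Finset

namespace BkAux

variable {V V' : Type}

/-- walk constancy from adjacency constancy -/
lemma constOnWalk {G : SimpleGraph V} {β : Sort*} (f : V → β)
    (h : ∀ x y, G.Adj x y → f x = f y) {x y : V} (p : G.Walk x y) : f x = f y := by
  induction p with
  | nil => rfl
  | cons hadj _ ih => exact (h _ _ hadj).trans ih

/-- lift to connected components from adjacency-constant function -/
def ccLift {G : SimpleGraph V} {β : Sort*} (f : V → β)
    (h : ∀ x y, G.Adj x y → f x = f y) : G.ConnectedComponent → β :=
  SimpleGraph.ConnectedComponent.lift f (fun _ _ p _ => constOnWalk f h p)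

@[simp] lemma ccLift_mk {G : SimpleGraph V} {β : Sort*} (f : V → β)
    (h : ∀ x y, G.Adj x y → f x = f y) (v : V) :
    ccLift f h (G.connectedComponentMk v) = f v := rfl

/-- iso on induced subgraphs from a graph iso -/
noncomputable def induceIso {G : SimpleGraph V} {G' : SimpleGraph V'} (f : G ≃g G') (s : Set V) :
    G.induce s ≃g G'.induce (⇑f '' s) where
  toEquiv := Equiv.Set.image f s f.toEquiv.injective
  map_rel_iff' := by
    intro a b
    simp only [Equiv.Set.image, Equiv.Set.imageOfInjOn, SimpleGraph.comap, Equiv.coe_fn_mk,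
      Set.imageFactorization]
    exact f.map_rel_iff

lemma graphB_congr_iso [Fintype V] [DecidableEq V] [Fintype V'] [DecidableEq V']
    {G : SimpleGraph V} {G' : SimpleGraph V'} (f : G ≃g G') (k : ℕ) :
    graphB k G = graphB k G' := by
  unfold graphB
  refine Finset.sum_nbij' (fun W => W.map f.toEquiv.toEmbedding)
    (fun W => W.map f.toEquiv.symm.toEmbedding) ?_ ?_ ?_ ?_ ?_
  · intro W hW
    simp only [Finset.mem_powersetCard_univ, Finset.card_map] at *
    exact hW
  · intro W hW
    simp only [Finset.mem_powersetCard_univ, Finset.card_map] at *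
    exact hW
  · intro W _
    simp [Finset.map_map, Function.comp]
    ext x; simp [RelIso.symm_apply_apply, RelIso.apply_symm_apply]
    constructor
    · rintro ⟨a, ha, h⟩
      have : a = x := (f.toEquiv.symm_apply_apply a).symm.trans h
      exact this ▸ ha
    · intro hx; exact ⟨x, hx, f.toEquiv.symm_apply_apply x⟩
  · intro W _
    simp [Finset.map_map, Function.comp]
    ext x; simp [RelIso.symm_apply_apply, RelIso.apply_symm_apply]
    constructor
    · rintro ⟨a, ha, h⟩
      have : a = x := (f.toEquiv.apply_symm_apply a).symm.trans h
      exact this ▸ ha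
    · intro hx; exact ⟨x, hx, f.toEquiv.apply_symm_apply x⟩
  · intro W _
    congr 1
    have h1 : ((W.map f.toEquiv.toEmbedding : Finset V') : Set V') = ⇑f '' (W : Set V) := by
      simp only [Finset.coe_map]; rfl
    rw [h1]
    exact_mod_cast Nat.card_congr (induceIso f (W : Set V)).connectedComponentEquiv

section CC
variable {A : Type} (H : SimpleGraph A) (v : A) (s : Set A)

lemma card_cc_of_neighbor (hv : v ∈ s)
    (hclique : ∀ x y, H.Adj v x → H.Adj v y → x ≠ y → H.Adj x y)
    {u₀ : A} (hu₀s : u₀ ∈ s) (hu₀ : H.Adj v u₀) :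
    Nat.card (H.induce s).ConnectedComponent
      = Nat.card (H.induce (s \ {v})).ConnectedComponent := by
  classical
  have hvu : u₀ ≠ v := fun h => H.irrefl (h ▸ hu₀)
  apply Nat.card_congr
  refine Equiv.mk (ccLift (fun x => if hx : (x : A) = v
      then (H.induce (s \ {v})).connectedComponentMk ⟨u₀, hu₀s, hvu⟩
      else (H.induce (s \ {v})).connectedComponentMk ⟨(x : A), x.2, hx⟩) ?_)
    (SimpleGraph.ConnectedComponent.map
      (SimpleGraph.induceHomOfLE H (Set.diff_subset)).toHom) ?_ ?_
  · intro x y hxy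
    have hadj : H.Adj (x : A) (y : A) := hxy
    by_cases hx : (x : A) = v <;> by_cases hy : (y : A) = v
    · exact absurd (hx ▸ hy ▸ hadj) (H.irrefl)
    · simp only [dif_pos hx, dif_neg hy]
      rcases eq_or_ne (y : A) u₀ with h | h
      · congr 1; exact Subtype.ext h.symm
      · refine SimpleGraph.ConnectedComponent.connectedComponentMk_eq_of_adj ?_
        show H.Adj u₀ (y : A)
        exact hclique u₀ (y : A) hu₀ (hx ▸ hadj) (Ne.symm h)
    · simp only [dif_pos hy, dif_neg hx]
      rcases eq_or_ne (x : A) u₀ with h | h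
      · congr 1; exact Subtype.ext h
      · refine (SimpleGraph.ConnectedComponent.connectedComponentMk_eq_of_adj ?_).symm
        show H.Adj u₀ (x : A)
        exact hclique u₀ (x : A) hu₀ (hy ▸ hadj.symm) (Ne.symm h)
    · simp only [dif_neg hx, dif_neg hy]
      exact SimpleGraph.ConnectedComponent.connectedComponentMk_eq_of_adj hadj
  · refine SimpleGraph.ConnectedComponent.ind ?_
    intro x
    by_cases hx : (x : A) = v
    · simp only [ccLift_mk, dif_pos hx, SimpleGraph.ConnectedComponent.map_mk]
      refine SimpleGraph.ConnectedComponent.connectedComponentMk_eq_of_adj ?_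
      show H.Adj u₀ (x : A)
      exact hx ▸ hu₀.symm
    · simp only [ccLift_mk, dif_neg hx, SimpleGraph.ConnectedComponent.map_mk]
      congr 1
  · refine SimpleGraph.ConnectedComponent.ind ?_
    intro x
    have hx : (x : A) ≠ v := x.2.2
    simp only [SimpleGraph.ConnectedComponent.map_mk, ccLift_mk]
    rw [dif_neg]
    · congr 1
    · exact hx

lemma card_cc_of_isolated [Finite A] (hv : v ∈ s) (hiso : ∀ u ∈ s, ¬ H.Adj v u) :
    Nat.card (H.induce s).ConnectedComponent
      = Nat.card (H.induce (s \ {v})).ConnectedComponent + 1 := by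
  classical
  have key : (H.induce s).ConnectedComponent
      ≃ Option (H.induce (s \ {v})).ConnectedComponent := by
    refine Equiv.mk (ccLift (fun x => if hx : (x : A) = v then none
      else some ((H.induce (s \ {v})).connectedComponentMk ⟨(x : A), x.2, hx⟩)) ?_)
      (fun o => o.elim ((H.induce s).connectedComponentMk ⟨v, hv⟩)
        (SimpleGraph.ConnectedComponent.map
          (SimpleGraph.induceHomOfLE H (Set.diff_subset)).toHom)) ?_ ?_
    · intro x y hxy
      have hadj : H.Adj (x : A) (y : A) := hxy
      have hx : (x : A) ≠ v := fun h => hiso (y : A) y.2 (h ▸ hadj)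
      have hy : (y : A) ≠ v := fun h => hiso (x : A) x.2 (h ▸ hadj.symm)
      simp only [dif_neg hx, dif_neg hy, Option.some_inj]
      exact SimpleGraph.ConnectedComponent.connectedComponentMk_eq_of_adj hadj
    · refine SimpleGraph.ConnectedComponent.ind ?_
      intro x
      by_cases hx : (x : A) = v
      · simp only [ccLift_mk, dif_pos hx, Option.elim]
        congr 1
        exact Subtype.ext hx.symm
      · simp only [ccLift_mk, dif_neg hx, Option.elim, SimpleGraph.ConnectedComponent.map_mk]
        congr 1
    · rintro (_ | c)
      · simp only [Option.elim, ccLift_mk, dif_pos]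
      · refine SimpleGraph.ConnectedComponent.ind (fun x => ?_) c
        have hx : (x : A) ≠ v := x.2.2
        simp only [Option.elim, SimpleGraph.ConnectedComponent.map_mk, ccLift_mk]
        rw [dif_neg]
        · congr 1
        · exact hx
  rw [Nat.card_congr key, Finite.card_option]

end CC

section Cone
variable {V : Type}

/-- Cone a new vertex over the set `N`. -/
def cone (G : SimpleGraph V) (N : Set V) : SimpleGraph (Option V) where
  Adj a b := match a, b with
    | some x, some y => G.Adj x y
    | some x, none => x ∈ N
    | none, some y => y ∈ N
    | none, none => False
  symm := by
    constructor
    rintro (_ | x) (_ | y) h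
    · exact h.elim
    · exact h
    · exact h
    · exact G.adj_symm h
  loopless := by
    constructor
    rintro (_ | x) h
    · exact h.elim
    · exact G.irrefl h

variable {G : SimpleGraph V} {N : Set V}

@[simp] lemma cone_adj_some_some {x y : V} :
    (cone G N).Adj (some x) (some y) ↔ G.Adj x y := Iff.rfl
@[simp] lemma cone_adj_none_some {y : V} : (cone G N).Adj none (some y) ↔ y ∈ N := Iff.rfl
@[simp] lemma cone_adj_some_none {x : V} : (cone G N).Adj (some x) none ↔ x ∈ N := Iff.rfl
@[simp] lemma cone_adj_none_none : ¬ (cone G N).Adj none none := fun h => h.elim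

/-- induced subgraph of a cone on a `some`-image. -/
noncomputable def coneSomeIso (G : SimpleGraph V) (N : Set V) (W : Set V) :
    G.induce W ≃g (cone G N).induce (some '' W) where
  toEquiv := Equiv.Set.image some W (Option.some_injective V)
  map_rel_iff' := by
    intro a b
    simp only [Equiv.Set.image, Equiv.Set.imageOfInjOn, SimpleGraph.comap, Equiv.coe_fn_mk,
      Set.imageFactorization]
    exact cone_adj_some_some

end Cone

section B
variable {V : Type} [Fintype V] [DecidableEq V]

lemma graphB_zero (G : SimpleGraph V) : graphB 0 G = -1 := by
  unfold graphB
  rw [Finset.powersetCard_zero, Finset.sum_singleton]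
  have : IsEmpty ((∅ : Finset V) : Set V) := by
    simp only [Finset.coe_empty]
    exact Set.isEmpty_coe_sort.mpr rfl
  have he : IsEmpty (G.induce ((∅ : Finset V) : Set V)).ConnectedComponent := by
    constructor
    exact fun c => SimpleGraph.ConnectedComponent.ind (fun x => this.false x) c
  rw [Nat.card_of_isEmpty]
  norm_num

lemma graphB_top (k : ℕ) (hk : 1 ≤ k) : graphB k (⊤ : SimpleGraph V) = 0 := by
  unfold graphB
  refine Finset.sum_eq_zero ?_
  intro W hW
  rw [Finset.mem_powersetCard_univ] at hW
  have hne : (W : Set V).Nonempty := by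
    rw [Finset.coe_nonempty, ← Finset.card_pos, hW]; omega
  have : Nonempty ((W : Set V)) := hne.to_subtype
  have htop : (⊤ : SimpleGraph V).induce (W : Set V) = ⊤ := by
    ext a b
    simp only [SimpleGraph.comap, SimpleGraph.top_adj]
    exact Subtype.coe_ne_coe
  rw [htop]
  have hc : Nat.card (⊤ : SimpleGraph ((W : Set V))).ConnectedComponent = 1 := by
    rw [Nat.card_eq_one_iff_unique]
    exact ⟨SimpleGraph.preconnected_top.subsingleton_connectedComponent,
      ⟨(⊤ : SimpleGraph ((W : Set V))).connectedComponentMk hne.to_subtype.some⟩⟩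
  rw [hc]
  ring

lemma graphB_cone (G : SimpleGraph V) (N : Finset V)
    (hcl : ∀ x ∈ N, ∀ y ∈ N, x ≠ y → G.Adj x y) (j : ℕ) :
    graphB (j + 1) (cone G (N : Set V))
      = graphB (j + 1) G + graphB j G + ((Fintype.card V - N.card).choose j : ℤ) := by
  classical
  have huniv : (Finset.univ : Finset (Option V))
      = insert none ((Finset.univ : Finset V).map Function.Embedding.some) := by
    ext (_ | x) <;> simp
  have hnone : (none : Option V) ∉ (Finset.univ : Finset V).map Function.Embedding.some := by
    simp
  have hdisj : Disjoint
      (Finset.powersetCard (j + 1) ((Finset.univ : Finset V).map Function.Embedding.some))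
      ((Finset.powersetCard j ((Finset.univ : Finset V).map Function.Embedding.some)).image
        (insert none)) := by
    rw [Finset.disjoint_left]
    intro W hW1 hW2
    rw [Finset.mem_powersetCard] at hW1
    rw [Finset.mem_image] at hW2
    obtain ⟨W', _, rfl⟩ := hW2
    exact hnone (hW1.1 (Finset.mem_insert_self none W'))
  unfold graphB
  rw [huniv, Finset.powersetCard_succ_insert hnone, Finset.sum_union hdisj]
  -- first sum
  have h1 : ∑ W ∈ Finset.powersetCard (j + 1)
        ((Finset.univ : Finset V).map Function.Embedding.some),
      ((Nat.card ((cone G (N : Set V)).induce (W : Set (Option V))).ConnectedComponent : ℤ) - 1)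
      = graphB (j + 1) G := by
    rw [Finset.powersetCard_map, Finset.sum_map]
    unfold graphB
    refine Finset.sum_congr rfl ?_
    intro W _
    congr 2
    have hme : (Finset.mapEmbedding (Function.Embedding.some (α := V))).toEmbedding W
        = W.map Function.Embedding.some := rfl
    rw [hme]
    have hc : ((W.map Function.Embedding.some : Finset (Option V)) : Set (Option V))
        = some '' (W : Set V) := by
      rw [Finset.coe_map]; rfl
    rw [hc]
    exact (Nat.card_congr (coneSomeIso G (N : Set V) (W : Set V)).connectedComponentEquiv).symm
  rw [h1]
  -- second sum
  have hinj : ∀ W ∈ Finset.powersetCard j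
        ((Finset.univ : Finset V).map Function.Embedding.some),
      ∀ W' ∈ Finset.powersetCard j ((Finset.univ : Finset V).map Function.Embedding.some),
      insert none W = insert none W' → W = W' := by
    intro W hW W' hW' he
    rw [Finset.mem_powersetCard] at hW hW'
    have h1 : none ∉ W := fun h => hnone (hW.1 h)
    have h2 : none ∉ W' := fun h => hnone (hW'.1 h)
    have := congrArg (Finset.erase · none) he
    simpa [Finset.erase_insert h1, Finset.erase_insert h2] using this
  rw [Finset.sum_image hinj, Finset.powersetCard_map, Finset.sum_map]
  -- pointwise evaluation of the second sum
  have hpt : ∀ W ∈ Finset.powersetCard j (Finset.univ : Finset V),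
      ((Nat.card ((cone G (N : Set V)).induce
          ((insert none ((Finset.mapEmbedding (Function.Embedding.some)).toEmbedding W)
            : Finset (Option V)) : Set (Option V))).ConnectedComponent : ℤ) - 1)
      = ((Nat.card (G.induce (W : Set V)).ConnectedComponent : ℤ) - 1)
        + (if W ∩ N = ∅ then 1 else 0) := by
    intro W _
    have hme : (Finset.mapEmbedding (Function.Embedding.some (α := V))).toEmbedding W
        = W.map Function.Embedding.some := rfl
    rw [hme]
    set s : Set (Option V) := ((insert none (W.map Function.Embedding.some)
        : Finset (Option V)) : Set (Option V)) with hs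
    have hvs : (none : Option V) ∈ s := by
      rw [hs]; simp
    have hsd : s \ {none} = some '' (W : Set V) := by
      ext (_ | x)
      · simp [hs]
      · simp [hs, Function.Embedding.some]
    have hclique : ∀ x y, (cone G (N : Set V)).Adj none x → (cone G (N : Set V)).Adj none y →
        x ≠ y → (cone G (N : Set V)).Adj x y := by
      rintro (_ | a) (_ | b) hx hy hne
      · exact absurd hx cone_adj_none_none
      · exact absurd hx cone_adj_none_none
      · exact absurd hy cone_adj_none_none
      · have ha : a ∈ N := cone_adj_none_some.mp hx
        have hb : b ∈ N := cone_adj_none_some.mp hy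
        have : a ≠ b := fun h => hne (by rw [h])
        exact cone_adj_some_some.mpr (hcl a ha b hb this)
    have hccW : Nat.card ((cone G (N : Set V)).induce (some '' (W : Set V))).ConnectedComponent
        = Nat.card (G.induce (W : Set V)).ConnectedComponent :=
      (Nat.card_congr (coneSomeIso G (N : Set V) (W : Set V)).connectedComponentEquiv).symm
    by_cases hWN : W ∩ N = ∅
    · have hiso : ∀ u ∈ s, ¬ (cone G (N : Set V)).Adj none u := by
        rintro (_ | a) hu
        · exact cone_adj_none_none
        · intro hadj
          have ha : a ∈ N := cone_adj_none_some.mp hadj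
          have haW : a ∈ W := by
            rw [hs] at hu
            simpa [Function.Embedding.some] using hu
          exact Finset.eq_empty_iff_forall_notMem.mp hWN a (Finset.mem_inter.mpr ⟨haW, ha⟩)
      rw [card_cc_of_isolated _ _ _ hvs hiso, hsd, hccW, if_pos hWN]
      push_cast
      ring
    · obtain ⟨u, hu⟩ := Finset.nonempty_iff_ne_empty.mpr hWN
      rw [Finset.mem_inter] at hu
      have hus : (some u : Option V) ∈ s := by
        rw [hs]; simp [Function.Embedding.some, hu.1]
      have huadj : (cone G (N : Set V)).Adj none (some u) := cone_adj_none_some.mpr hu.2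
      rw [card_cc_of_neighbor _ _ _ hvs hclique hus huadj, hsd, hccW, if_neg hWN]
      push_cast
      ring
  rw [Finset.sum_congr rfl hpt, Finset.sum_add_distrib]
  have hfil : (Finset.powersetCard j (Finset.univ : Finset V)).filter (fun W => W ∩ N = ∅)
      = Finset.powersetCard j Nᶜ := by
    ext W
    simp only [Finset.mem_filter, Finset.mem_powersetCard]
    constructor
    · rintro ⟨⟨_, hc⟩, he⟩
      refine ⟨fun a ha => Finset.mem_compl.2 (fun haN => ?_), hc⟩
      exact (Finset.eq_empty_iff_forall_notMem.1 he a) (Finset.mem_inter.2 ⟨ha, haN⟩)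
    · rintro ⟨hsub, hc⟩
      refine ⟨⟨Finset.subset_univ W, hc⟩, Finset.eq_empty_iff_forall_notMem.2 ?_⟩
      rintro a ha
      rw [Finset.mem_inter] at ha
      exact Finset.mem_compl.1 (hsub ha.1) ha.2
  have hcount : (∑ W ∈ Finset.powersetCard j (Finset.univ : Finset V),
      (if W ∩ N = ∅ then (1 : ℤ) else 0))
      = ((Fintype.card V - N.card).choose j : ℤ) := by
    rw [Finset.sum_boole, hfil, Finset.card_powersetCard, Finset.card_compl]
  rw [hcount]
  unfold graphB
  ring

end B

section Step
variable {V₁ V : Type} [Fintype V₁] [DecidableEq V₁] [Fintype V] [DecidableEq V]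

lemma graphB_step {t : ℕ} {G₁ : SimpleGraph V₁} {G : SimpleGraph V}
    (h : IsConnSum t G₁ (⊤ : SimpleGraph (Fin (t + 1))) G) :
    Fintype.card V = Fintype.card V₁ + 1 ∧ ∀ j : ℕ,
      graphB (j + 1) G = graphB (j + 1) G₁ + graphB j G₁
        + (((Fintype.card V₁) - t).choose j : ℤ) := by
  classical
  obtain ⟨f₁, f₂, F₁, F₂, hF₁card, hF₂card, hcl1, hcl2, hcover, hinter, himeq, hadj⟩ := h
  -- the complement of F₂ is a singleton {w₀}
  have hficard : Fintype.card (Fin (t + 1)) = t + 1 := by simp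
  have hncard2 : F₂.ncard = t := by rw [← Nat.card_coe_set_eq]; exact hF₂card
  have hcompl : F₂ᶜ.ncard = 1 := by
    have := Set.ncard_add_ncard_compl F₂ (Set.toFinite F₂)
    rw [hncard2, Nat.card_eq_fintype_card, hficard] at this
    omega
  obtain ⟨w₀, hw₀⟩ := Set.ncard_eq_one.mp hcompl
  have hw₀F₂ : w₀ ∉ F₂ := by
    have : w₀ ∈ F₂ᶜ := by rw [hw₀]; exact rfl
    exact this
  set v : V := f₂ w₀ with hv
  -- v is not in the range of f₁
  have hvnr : v ∉ Set.range f₁ := by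
    intro hvr
    have h2 : v ∈ Set.range f₁ ∩ Set.range f₂ := ⟨hvr, ⟨w₀, rfl⟩⟩
    rw [hinter, himeq] at h2
    obtain ⟨y, hy, hyv⟩ := h2
    exact hw₀F₂ (f₂.injective hyv ▸ hy)
  -- members of f₁ '' F₁ pulled back
  have hmemF₁ : ∀ x : V₁, f₁ x ∈ Set.range f₂ → x ∈ F₁ := by
    intro x hx
    have h2 : f₁ x ∈ Set.range f₁ ∩ Set.range f₂ := ⟨⟨x, rfl⟩, hx⟩
    rw [hinter] at h2
    obtain ⟨y, hy, hyx⟩ := h2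
    exact f₁.injective hyx ▸ hy
  -- the equivalence
  have hbij : Function.Bijective (fun o : Option V₁ => o.elim v f₁) := by
    constructor
    · rintro (_ | x) (_ | y) hxy
      · rfl
      · exact absurd ⟨y, hxy.symm⟩ hvnr
      · exact absurd ⟨x, hxy⟩ hvnr
      · exact congrArg some (f₁.injective hxy)
    · intro a
      have ha : a ∈ Set.range f₁ ∪ Set.range f₂ := by rw [hcover]; trivial
      rcases ha with ⟨x, hx⟩ | ⟨w, hw⟩
      · exact ⟨some x, hx⟩
      · by_cases hwF : w ∈ F₂
        · have : a ∈ f₁ '' F₁ := by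
            rw [himeq]; exact ⟨w, hwF, hw⟩
          obtain ⟨x, _, hx⟩ := this
          exact ⟨some x, hx⟩
        · have hww : w ∈ F₂ᶜ := hwF
          rw [hw₀] at hww
          rcases hww with rfl
          exact ⟨none, hw⟩
  let e : Option V₁ ≃ V := Equiv.ofBijective _ hbij
  have he_some : ∀ x : V₁, e (some x) = f₁ x := fun _ => rfl
  have he_none : e none = v := rfl
  -- the graph isomorphism with the cone
  have hiso_adj : ∀ a b : Option V₁, G.Adj (e a) (e b) ↔ (cone G₁ F₁).Adj a b := by
    have key : ∀ y : V₁, G.Adj v (f₁ y) ↔ y ∈ F₁ := by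
      intro y
      constructor
      · intro hGadj
        rcases (hadj _ _).mp hGadj with ⟨x', y', _, hx', _⟩ | ⟨x', y', _, _, hy'⟩
        · exact absurd ⟨x', hx'⟩ hvnr
        · exact hmemF₁ y ⟨y', hy'⟩
      · intro hyF
        have : f₁ y ∈ f₂ '' F₂ := by rw [← himeq]; exact ⟨y, hyF, rfl⟩
        obtain ⟨b, hbF, hb⟩ := this
        have hbw : w₀ ≠ b := fun hbe => hw₀F₂ (hbe ▸ hbF)
        exact (hadj _ _).mpr (Or.inr ⟨w₀, b, by simpa using hbw, rfl, hb⟩)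
    have keyf : ∀ x y : V₁, G.Adj (f₁ x) (f₁ y) ↔ G₁.Adj x y := by
      intro x y
      constructor
      · intro hGadj
        rcases (hadj _ _).mp hGadj with ⟨x', y', ha', hx', hy'⟩ | ⟨x', y', ha', hx', hy'⟩
        · rwa [f₁.injective hx', f₁.injective hy'] at ha'
        · have hxF : x ∈ F₁ := hmemF₁ x ⟨x', hx'⟩
          have hyF : y ∈ F₁ := hmemF₁ y ⟨y', hy'⟩
          have hxy : x ≠ y := by
            intro hxy
            have : f₂ x' = f₂ y' := by rw [hx', hy', hxy]
            exact (SimpleGraph.top_adj _ _).mp ha' (f₂.injective this)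
          exact hcl1 x hxF y hyF hxy
      · intro h₁
        exact (hadj _ _).mpr (Or.inl ⟨x, y, h₁, rfl, rfl⟩)
    rintro (_ | x) (_ | y)
    · simpa [he_none] using (G.irrefl (a := v))
    · simpa [he_none, he_some] using key y
    · rw [he_none, he_some, G.adj_comm]
      simpa using key x
    · simpa [he_some] using keyf x y
  let φ : cone G₁ F₁ ≃g G := ⟨e, by intro a b; exact hiso_adj a b⟩
  constructor
  · rw [← Fintype.card_congr e, Fintype.card_option]
  · intro j
    have hBG : graphB (j + 1) G = graphB (j + 1) (cone G₁ F₁) :=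
      (graphB_congr_iso φ (j + 1)).symm
    -- express F₁ as a finset
    have hfin : F₁.Finite := Set.toFinite F₁
    have hco : (hfin.toFinset : Set V₁) = F₁ := hfin.coe_toFinset
    have hcardF : hfin.toFinset.card = t := by
      rw [← Set.ncard_eq_toFinset_card F₁ hfin, ← Nat.card_coe_set_eq]
      exact hF₁card
    have hclF : ∀ x ∈ hfin.toFinset, ∀ y ∈ hfin.toFinset, x ≠ y → G₁.Adj x y := by
      intro x hx y hy hxy
      rw [Set.Finite.mem_toFinset] at hx hy
      exact hcl1 x hx y hy hxy
    have := graphB_cone G₁ hfin.toFinset hclF j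
    rw [hco, hcardF] at this
    rw [hBG, this]
end Step

/-- Main induction: iterated `t`-connected sums of copies of `K_{t+1}`. -/
lemma aux (t : ℕ) {l : List ((W : Type) × SimpleGraph W)} {P : (W : Type) × SimpleGraph W}
    (h : IsIterConnSum t l P)
    (hall : ∀ q ∈ l, q = ⟨Fin (t + 1), (⊤ : SimpleGraph (Fin (t + 1)))⟩) :
    ∀ (i1 : Fintype P.1) (i2 : DecidableEq P.1),
      @Fintype.card P.1 i1 = t + l.length ∧
      ∀ k : ℕ, 1 ≤ k →
        @graphB P.1 i1 i2 k P.2 = ((k : ℤ) - 1) * ((l.length).choose k : ℤ) := by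
  induction h with
  | single p =>
    have hp : p = ⟨Fin (t + 1), (⊤ : SimpleGraph (Fin (t + 1)))⟩ := hall p (by simp)
    subst hp
    intro i1 i2
    constructor
    · have : i1 = Fin.fintype (t + 1) := Subsingleton.elim _ _
      subst this
      simp
    · intro k hk
      rw [@graphB_top _ i1 i2 k hk]
      simp only [List.length_singleton]
      rcases Nat.lt_or_ge k 2 with hk2 | hk2
      · have : k = 1 := by omega
        subst this
        norm_num
      · rw [Nat.choose_eq_zero_of_lt (by omega)]
        norm_num
  | @cons l p q r hl hsum ih =>
    have hq : q = ⟨Fin (t + 1), (⊤ : SimpleGraph (Fin (t + 1)))⟩ :=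
      hall q (by simp)
    subst hq
    have hl' : ∀ x ∈ l, x = (⟨Fin (t + 1), (⊤ : SimpleGraph (Fin (t + 1)))⟩ :
        (W : Type) × SimpleGraph W) := fun x hx => hall x (List.mem_append_left _ hx)
    intro i1 i2
    obtain ⟨f₁, -⟩ := id hsum
    haveI ip1 : Fintype p.1 := @Fintype.ofInjective _ _ i1 f₁ f₁.injective
    haveI ip2 : DecidableEq p.1 := Classical.decEq _
    obtain ⟨hcard, hB⟩ := ih hl' ip1 ip2
    obtain ⟨hcard', hB'⟩ := @graphB_step p.1 r.1 ip1 ip2 i1 i2 t p.2 r.2 hsum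
    set m := l.length with hm
    have hlen : (l ++ [(⟨Fin (t + 1), (⊤ : SimpleGraph (Fin (t + 1)))⟩ :
        (W : Type) × SimpleGraph W)]).length = m + 1 := by simp; rfl
    rw [hlen]
    constructor
    · rw [hcard', hcard]; omega
    · intro k hk
      obtain ⟨j, rfl⟩ : ∃ j, k = j + 1 := ⟨k - 1, by omega⟩
      have hmt : @Fintype.card p.1 ip1 - t = m := by rw [hcard]; omega
      rw [hB' j, hmt, hB (j + 1) (by omega)]
      rcases Nat.eq_zero_or_pos j with rfl | hj
      · rw [graphB_zero]
        simp
      · rw [hB j hj]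
        obtain ⟨i, rfl⟩ : ∃ i, j = i + 1 := ⟨j - 1, by omega⟩
        push_cast [Nat.choose_succ_succ m (i + 1)]
        ring

end BkAux


/-- a `t`-connected sum of `n` copies of `K_{t+1}` has `t + n` vertices and
`b_k = (k-1)·C(n,k)` for `k ≥ 1`. -/
theorem bk_connSum_completeGraphs {V : Type} [Fintype V] [DecidableEq V] (t n : ℕ)
    (ht : 1 ≤ t) (G : SimpleGraph V)
    (h : IsIterConnSum t (List.replicate n ⟨Fin (t + 1), (⊤ : SimpleGraph (Fin (t + 1)))⟩)
      ⟨V, G⟩) :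
    Fintype.card V = t + n ∧ ∀ k, 1 ≤ k → graphB k G = ((k : ℤ) - 1) * (n.choose k) := by
  have := BkAux.aux t h (fun q hq => List.eq_of_mem_replicate hq) ‹Fintype V› ‹DecidableEq V›
  rw [List.length_replicate] at this
  exact this
end

section
/- Let T be any tree with n+1 vertices. Then b_k(T) = (k−1)·C(n,k) for all k ≥ 1. In particular b_k(T) does not depend on the shape of the tree, only on its number of vertices. -/
open Finset

section BkTreeAux
open SimpleGraph

lemma induce_supp_connected' {V : Type} (G : SimpleGraph V) (c : G.ConnectedComponent) :
    (G.induce c.supp).Connected := by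
  classical
  induction c using SimpleGraph.ConnectedComponent.ind with
  | _ u =>
    apply G.induce_connected_of_patches u (by simp [ConnectedComponent.mem_supp_iff])
    intro v hv
    rw [ConnectedComponent.mem_supp_iff, ConnectedComponent.eq] at hv
    obtain ⟨p⟩ := hv.symm
    refine ⟨{w | w ∈ p.support}, ?_, p.start_mem_support, p.end_mem_support,
      (p.connected_induce_support).preconnected _ _⟩
    intro w hw
    rw [Set.mem_setOf_eq] at hw
    rw [ConnectedComponent.mem_supp_iff]
    exact (ConnectedComponent.eq.mpr ((p.takeUntil w hw).reachable)).symm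

lemma isAcyclic_induce {V : Type} {G : SimpleGraph V} (hG : G.IsAcyclic) (s : Set V) :
    (G.induce s).IsAcyclic := by
  intro v c hc
  exact hG (c.map (SimpleGraph.Embedding.induce (G := G) s).toHom)
    (hc.map (SimpleGraph.Embedding.induce (G := G) s).injective)

lemma pairs_induce {V : Type} [Fintype V] (G : SimpleGraph V) (s : Set V) [Fintype s]
    [DecidablePred (· ∈ s)] [DecidableRel G.Adj] :
    #(univ.filter fun p : s × s => (G.induce s).Adj p.1 p.2)
      = #(univ.filter fun p : V × V => G.Adj p.1 p.2 ∧ p.1 ∈ s ∧ p.2 ∈ s) := by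
  classical
  apply Finset.card_bij (fun p _ => ((p.1.1 : V), (p.2.1 : V)))
  · rintro ⟨x, y⟩ h
    simp only [mem_filter, mem_univ, true_and] at h ⊢
    exact ⟨h, x.2, y.2⟩
  · rintro ⟨x, y⟩ _ ⟨x', y'⟩ _ h
    simp only [Prod.mk.injEq] at h
    exact Prod.ext (Subtype.ext h.1) (Subtype.ext h.2)
  · rintro ⟨a, b⟩ h
    simp only [mem_filter, mem_univ, true_and] at h
    exact ⟨(⟨a, h.2.1⟩, ⟨b, h.2.2⟩), by simp [h.1], rfl⟩

lemma two_mul_pairs (V : Type) [Fintype V] (G : SimpleGraph V) [DecidableRel G.Adj] :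
    2 * #G.edgeFinset = #(univ.filter fun p : V × V => G.Adj p.1 p.2) := by
  rw [SimpleGraph.two_mul_card_edgeFinset]

lemma acyclic_card_comp {V : Type} [Fintype V] (G : SimpleGraph V) (hG : G.IsAcyclic) :
    Nat.card G.ConnectedComponent + Nat.card G.edgeSet = Fintype.card V := by
  classical
  set P := univ.filter fun p : V × V => G.Adj p.1 p.2 with hP
  have h2E : 2 * Nat.card G.edgeSet = #P := by
    rw [Nat.card_eq_fintype_card, ← SimpleGraph.edgeFinset_card]
    exact two_mul_pairs V G
  have hfib : #P = ∑ c : G.ConnectedComponent,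
      #(P.filter fun p => G.connectedComponentMk p.1 = c) :=
    Finset.card_eq_sum_card_fiberwise (fun p _ => mem_univ _)
  have hcomp : ∀ c : G.ConnectedComponent,
      #(P.filter fun p => G.connectedComponentMk p.1 = c) + 2 = 2 * Fintype.card c.supp := by
    intro c
    have htree : (G.induce c.supp).IsTree := ⟨induce_supp_connected' G c, isAcyclic_induce hG _⟩
    have hE := htree.card_edgeFinset
    have h2 := two_mul_pairs _ (G.induce c.supp)
    rw [pairs_induce] at h2
    have hfe : (P.filter fun p => G.connectedComponentMk p.1 = c)
        = univ.filter fun p : V × V => G.Adj p.1 p.2 ∧ p.1 ∈ c.supp ∧ p.2 ∈ c.supp := by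
      rw [hP, Finset.filter_filter]
      apply Finset.filter_congr
      intro p _
      constructor
      · rintro ⟨ha, hc⟩
        refine ⟨ha, hc, ?_⟩
        rw [ConnectedComponent.mem_supp_iff, ← hc]
        exact (ConnectedComponent.connectedComponentMk_eq_of_adj ha).symm
      · rintro ⟨ha, hc, -⟩
        exact ⟨ha, hc⟩
    rw [hfe, ← h2, ← hE]
    ring
  have hV : Fintype.card V = ∑ c : G.ConnectedComponent, Fintype.card c.supp := by
    rw [← Fintype.card_sigma]
    apply Fintype.card_congr
    exact (Equiv.sigmaFiberEquiv (G.connectedComponentMk)).symm.trans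
      (Equiv.sigmaCongrRight fun c =>
        Equiv.subtypeEquivRight fun v => (ConnectedComponent.mem_supp_iff c v).symm)
  have key : 2 * (Nat.card G.ConnectedComponent + Nat.card G.edgeSet) = 2 * Fintype.card V := by
    rw [Nat.mul_add, h2E, hfib, Nat.card_eq_fintype_card, hV, Finset.mul_sum]
    rw [show (∑ c : G.ConnectedComponent, 2 * Fintype.card c.supp)
        = ∑ c : G.ConnectedComponent,
          (#(P.filter fun p => G.connectedComponentMk p.1 = c) + 2) from
      Finset.sum_congr rfl fun c _ => (hcomp c).symm]
    rw [Finset.sum_add_distrib, Finset.sum_const, Finset.card_univ, smul_eq_mul]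
    ring
  omega

lemma count_subsets_pair {V : Type} [Fintype V] [DecidableEq V] {a b : V} (hab : a ≠ b)
    (j n : ℕ) (hcard : Fintype.card V = n + 1) :
    #((powersetCard (j+2) (univ : Finset V)).filter fun W => a ∈ W ∧ b ∈ W)
      = (n - 1).choose j := by
  have hbase : #((univ : Finset V).erase a |>.erase b) = n - 1 := by
    rw [Finset.card_erase_of_mem (Finset.mem_erase.mpr ⟨hab.symm, mem_univ b⟩),
      Finset.card_erase_of_mem (mem_univ a), Finset.card_univ, hcard]
    omega
  rw [← hbase, ← Finset.card_powersetCard]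
  apply Finset.card_bij' (fun W _ => (W.erase a).erase b)
    (fun W' _ => insert a (insert b W'))
  · rintro W hW
    simp only [mem_filter] at hW
    obtain ⟨-, ha, hb⟩ := hW
    rw [Finset.insert_erase (Finset.mem_erase.mpr ⟨hab.symm, hb⟩), Finset.insert_erase ha]
  · rintro W' hW'
    rw [Finset.mem_powersetCard] at hW'
    have haW' : a ∉ W' := fun h => by simpa using (Finset.mem_erase.mp (hW'.1 h)).2
    have hbW' : b ∉ W' := fun h => by simpa using Finset.mem_erase.mp (hW'.1 h)
    have haiW' : a ∉ insert b W' := by simp [hab, haW']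
    rw [Finset.erase_insert haiW', Finset.erase_insert hbW']

  · rintro W hW
    simp only [mem_filter, Finset.mem_powersetCard] at hW
    obtain ⟨⟨-, hWk⟩, ha, hb⟩ := hW
    rw [Finset.mem_powersetCard]
    constructor
    · intro x hx
      simp only [Finset.mem_erase] at hx ⊢
      exact ⟨hx.1, hx.2.1, mem_univ x⟩
    · rw [Finset.card_erase_of_mem (Finset.mem_erase.mpr ⟨hab.symm, hb⟩),
        Finset.card_erase_of_mem ha, hWk]
      omega
  · rintro W' hW'
    rw [Finset.mem_powersetCard] at hW'
    obtain ⟨hsub, hk⟩ := hW'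
    have haW' : a ∉ W' := fun h => by simpa using (Finset.mem_erase.mp (hsub h)).2
    have hbW' : b ∉ W' := fun h => by simpa using Finset.mem_erase.mp (hsub h)
    have haiW' : a ∉ insert b W' := by simp [hab, haW']
    simp only [mem_filter, Finset.mem_powersetCard]
    refine ⟨⟨fun x _ => mem_univ x, ?_⟩, by simp, by simp⟩
    rw [Finset.card_insert_of_notMem haiW', Finset.card_insert_of_notMem hbW', hk]
lemma choose_identity (n j : ℕ) : (j + 1) * n.choose (j+1) = n * (n-1).choose j := by
  cases n with
  | zero => simp
  | succ m =>
    simp only [Nat.succ_sub_one]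
    rw [mul_comm]
    exact (Nat.add_one_mul_choose_eq m j).symm

-- card of induced graph on finset coercion
lemma card_coe_set_finset {V : Type} [Fintype V] [DecidableEq V] (W : Finset V) :
    Fintype.card ((W : Set V) : Type) = W.card := by
  rw [← Nat.card_eq_fintype_card, Nat.card_coe_set_eq, Set.ncard_coe_finset]

lemma comp_add_edges_induce {V : Type} [Fintype V] [DecidableEq V] {G : SimpleGraph V}
    (hG : G.IsAcyclic) (W : Finset V) :
    Nat.card (G.induce (W : Set V)).ConnectedComponent
      + Nat.card (G.induce (W : Set V)).edgeSet = W.card := by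
  rw [acyclic_card_comp _ (isAcyclic_induce hG _), card_coe_set_finset]

end BkTreeAux

/-- for any tree `T` with `n+1` vertices, `b_k(T) = (k-1)·C(n,k)` for `k ≥ 1`;
in particular it only depends on the number of vertices. -/
theorem bk_tree {V : Type} [Fintype V] [DecidableEq V] (n : ℕ)
    (T : SimpleGraph V) (hT : T.IsTree) (hcard : Fintype.card V = n + 1)
    (k : ℕ) (hk : 1 ≤ k) :
    graphB k T = ((k : ℤ) - 1) * (n.choose k) := by
  classical
  have hac : T.IsAcyclic := hT.2
  obtain rfl | ⟨j, rfl⟩ : k = 1 ∨ ∃ j, k = j + 2 := by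
    rcases Nat.lt_or_ge k 2 with h | h
    · left; omega
    · right; exact ⟨k - 2, by omega⟩
  · -- k = 1
    rw [graphB]
    rw [Finset.sum_eq_zero, Nat.cast_one]
    · ring
    intro W hW
    rw [Finset.mem_powersetCard] at hW
    have h1 := comp_add_edges_induce hac W
    rw [hW.2] at h1
    have hne : W.Nonempty := Finset.card_pos.mp (by omega)
    haveI : Nonempty ((W : Set V) : Type) := ⟨⟨hne.choose, by simpa using hne.choose_spec⟩⟩
    haveI : Nonempty (T.induce (W : Set V)).ConnectedComponent :=
      Nonempty.map (T.induce (W : Set V)).connectedComponentMk ‹_›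
    have hpos : 0 < Nat.card (T.induce (W : Set V)).ConnectedComponent := Nat.card_pos
    have : Nat.card (T.induce (W : Set V)).ConnectedComponent = 1 := by omega
    rw [this]
    ring
  · -- k = j + 2
    set P : Finset (V × V) := univ.filter fun p : V × V => T.Adj p.1 p.2 with hP
    have hTedges : #T.edgeFinset = n := by
      have := hT.card_edgeFinset
      omega
    have h2E : ∀ W : Finset V, 2 * Nat.card (T.induce (W : Set V)).edgeSet
        = #(P.filter fun p : V × V => p.1 ∈ W ∧ p.2 ∈ W) := by
      intro W
      rw [Nat.card_eq_fintype_card, ← SimpleGraph.edgeFinset_card,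
        two_mul_pairs _ (T.induce (W : Set V)), pairs_induce T (W : Set V), hP,
        Finset.filter_filter]
      congr 1
    have hSE : 2 * ∑ W ∈ powersetCard (j+2) (univ : Finset V),
        Nat.card (T.induce (W : Set V)).edgeSet = 2 * (n * (n-1).choose j) := by
      rw [Finset.mul_sum]
      calc ∑ W ∈ powersetCard (j+2) (univ : Finset V),
            2 * Nat.card (T.induce (W : Set V)).edgeSet
          = ∑ W ∈ powersetCard (j+2) (univ : Finset V),
            ∑ p ∈ P, if p.1 ∈ W ∧ p.2 ∈ W then 1 else 0 := by
            refine Finset.sum_congr rfl fun W _ => ?_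
            rw [h2E W, Finset.card_filter]
        _ = ∑ p ∈ P, ∑ W ∈ powersetCard (j+2) (univ : Finset V),
            if p.1 ∈ W ∧ p.2 ∈ W then 1 else 0 := Finset.sum_comm
        _ = ∑ p ∈ P, (n-1).choose j := by
            refine Finset.sum_congr rfl fun p hp => ?_
            rw [← Finset.card_filter]
            rw [hP, Finset.mem_filter] at hp
            exact count_subsets_pair hp.2.ne j n hcard
        _ = 2 * (n * (n-1).choose j) := by
            rw [Finset.sum_const, smul_eq_mul, ← two_mul_pairs V T, hTedges]
            ring
    have hSE' : ∑ W ∈ powersetCard (j+2) (univ : Finset V),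
        Nat.card (T.induce (W : Set V)).edgeSet = n * (n-1).choose j := by omega
    rw [graphB]
    have hterm : ∀ W ∈ powersetCard (j+2) (univ : Finset V),
        (Nat.card (T.induce (W : Set V)).ConnectedComponent : ℤ) - 1
          = (((j:ℤ) + 2) - 1 - (Nat.card (T.induce (W : Set V)).edgeSet : ℤ)) := by
      intro W hW
      rw [Finset.mem_powersetCard] at hW
      have h1 := comp_add_edges_induce hac W
      rw [hW.2] at h1
      have h2 : (Nat.card (T.induce (W : Set V)).ConnectedComponent : ℤ)
          + (Nat.card (T.induce (W : Set V)).edgeSet : ℤ) = (j : ℤ) + 2 := by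
        exact_mod_cast h1
      linarith
    rw [Finset.sum_congr rfl hterm, Finset.sum_sub_distrib, Finset.sum_const,
      Finset.card_powersetCard, Finset.card_univ, hcard]
    rw [← Nat.cast_sum, hSE']
    have h1 : ((n+1).choose (j+2) : ℤ) = n.choose (j+1) + n.choose (j+2) := by
      exact_mod_cast Nat.choose_succ_succ' n (j+1)
    have h2 : ((j:ℤ)+1) * n.choose (j+1) = (n : ℤ) * (n-1).choose j := by
      exact_mod_cast choose_identity n j
    rw [nsmul_eq_mul]
    push_cast
    linear_combination ((j:ℤ)+1) * h1 + h2
end
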